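/- arXiv:2103.10349 — 5 statements merged into one kernel-verified Lean document; each statement's English description precedes it below -/
import Mathlib

section
/- If A and B are sets of positive integers with counting functions satisfying A(N) ≤ (a + o(1))N^α and B(N) ≤ (b + o(1))N^β as N → ∞ (where 0 < α, β < 1 and a, b > 0), then the number of pairs (x, y) ∈ A × B with x + y ≤ N is at most ((a·b·α·β·Γ(α)Γ(β))/((α+β)Γ(α+β)) + o(1))·N^(α+β) as N → ∞. -/
open Real MeasureTheory

lemma my_rpow_subadd {x y p : ℝ} (hx : 0 ≤ x) (hy : 0 ≤ y) (hp : 0 ≤ p) (hp1 : p ≤ 1) :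
    (x + y) ^ p ≤ x ^ p + y ^ p := by
  lift x to NNReal using hx
  lift y to NNReal using hy
  have h := NNReal.rpow_add_le_add_rpow x y hp hp1
  exact_mod_cast h

lemma my_abel (K : ℕ) (f g : ℕ → ℝ) (hf : f 0 = 0) (hg : g (K + 1) = 0) :
    ∑ j ∈ Finset.range K, (f (j + 1) - f j) * g (j + 1)
      = ∑ j ∈ Finset.range K, f (j + 1) * (g (j + 1) - g (j + 2)) := by
  have key : ∑ j ∈ Finset.range K, f j * g (j + 1)
      = ∑ j ∈ Finset.range K, f (j + 1) * g (j + 2) := by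
    have h1 := Finset.sum_range_succ (fun j => f j * g (j + 1)) K
    have h2 := Finset.sum_range_succ' (fun j => f j * g (j + 1)) K
    simp only [hf, hg, mul_zero, zero_mul, add_zero] at h1 h2
    rw [h1] at h2
    have e : ∀ j : ℕ, j + 1 + 1 = j + 2 := fun _ => rfl
    simp only [e] at h2
    exact h2
  simp only [sub_mul, mul_sub, Finset.sum_sub_distrib]
  rw [key]

lemma my_real_beta {s t : ℝ} (hs : 0 < s) (ht : 0 < t) :
    ∫ x in (0:ℝ)..1, x ^ (s - 1) * (1 - x) ^ (t - 1)
      = Real.Gamma s * Real.Gamma t / Real.Gamma (s + t) := by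
  have h := Complex.Gamma_mul_Gamma_eq_betaIntegral (s := (s:ℂ)) (t := (t:ℂ))
    (by simpa using hs) (by simpa using ht)
  have hcoe : Complex.betaIntegral s t
      = ((∫ x in (0:ℝ)..1, x ^ (s - 1) * (1 - x) ^ (t - 1) : ℝ) : ℂ) := by
    rw [Complex.betaIntegral, ← intervalIntegral.integral_ofReal]
    apply intervalIntegral.integral_congr
    intro x hx
    rw [Set.uIcc_of_le (by norm_num : (0:ℝ) ≤ 1), Set.mem_Icc] at hx
    obtain ⟨hx0, hx1⟩ := hx
    show (x:ℂ) ^ ((s:ℂ) - 1) * (1 - (x:ℂ)) ^ ((t:ℂ) - 1)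
        = ((x ^ (s - 1) * (1 - x) ^ (t - 1) : ℝ) : ℂ)
    rw [Complex.ofReal_mul, Complex.ofReal_cpow hx0, Complex.ofReal_cpow (by linarith)]
    push_cast
    ring
  rw [hcoe, ← Complex.ofReal_add, Complex.Gamma_ofReal, Complex.Gamma_ofReal,
    Complex.Gamma_ofReal] at h
  have hne : Real.Gamma (s + t) ≠ 0 := (Real.Gamma_pos_of_pos (by linarith)).ne'
  have h' : Real.Gamma s * Real.Gamma t
      = Real.Gamma (s + t) * ∫ x in (0:ℝ)..1, x ^ (s - 1) * (1 - x) ^ (t - 1) := by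
    exact_mod_cast h
  field_simp [hne] at h' ⊢
  linarith [h']

lemma my_integrable01 {α β : ℝ} (hα : 0 ≤ α) (hβ : 0 < β) :
    IntervalIntegrable (fun t : ℝ => β * t ^ (β - 1) * (1 - t) ^ α) volume 0 1 := by
  rw [intervalIntegrable_iff_integrableOn_Ioc_of_le zero_le_one]
  have hg : IntegrableOn (fun t : ℝ => β * t ^ (β - 1)) (Set.Ioc 0 1) volume := by
    have := (intervalIntegral.intervalIntegrable_rpow' (a := 0) (b := 1)
      (by linarith : (-1:ℝ) < β - 1)).const_mul β
    rwa [intervalIntegrable_iff_integrableOn_Ioc_of_le zero_le_one] at this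
  apply hg.integrable.mono
  · apply ContinuousOn.aestronglyMeasurable _ measurableSet_Ioc
    apply ContinuousOn.mul
    · exact continuousOn_const.mul (continuousOn_id.rpow_const fun x hx => Or.inl (ne_of_gt hx.1))
    · exact (continuousOn_const.sub continuousOn_id).rpow_const fun x _ => Or.inr hα
  · rw [ae_restrict_iff' measurableSet_Ioc]
    filter_upwards with t ht
    obtain ⟨ht0, ht1⟩ := ht
    have h1 : (0:ℝ) ≤ 1 - t := by linarith
    have h2 : (1 - t) ^ α ≤ 1 := Real.rpow_le_one h1 (by linarith) hα
    have h3 : 0 ≤ (1 - t) ^ α := Real.rpow_nonneg h1 α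
    rw [Real.norm_eq_abs, Real.norm_eq_abs, abs_mul, abs_of_nonneg h3]
    exact mul_le_of_le_one_right (abs_nonneg _) h2

lemma my_sum_T_le {α β : ℝ} (hα : 0 < α) (hα1 : α < 1) (hβ : 0 < β) (hβ1 : β < 1)
    (K : ℕ) (hK : 0 < K) :
    ∑ j ∈ Finset.range K,
        ((((j:ℝ)+1)/(K:ℝ))^β - ((j:ℝ)/(K:ℝ))^β) * (((K - j : ℕ):ℝ)/(K:ℝ))^α
      ≤ α * β * Real.Gamma α * Real.Gamma β / ((α+β) * Real.Gamma (α+β)) + (1/(K:ℝ))^α := by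
  have hKR : (0:ℝ) < K := Nat.cast_pos.mpr hK
  set f : ℝ → ℝ := fun t => β * t ^ (β - 1) * (1 - t) ^ α with hf
  -- step 1: pointwise split of the weight
  have hstep1 : ∑ j ∈ Finset.range K,
        ((((j:ℝ)+1)/(K:ℝ))^β - ((j:ℝ)/(K:ℝ))^β) * (((K - j : ℕ):ℝ)/(K:ℝ))^α
      ≤ (∑ j ∈ Finset.range K,
          ((((j:ℝ)+1)/(K:ℝ))^β - ((j:ℝ)/(K:ℝ))^β) * (((K - (j+1) : ℕ):ℝ)/(K:ℝ))^α)
        + (∑ j ∈ Finset.range K,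
          ((((j:ℝ)+1)/(K:ℝ))^β - ((j:ℝ)/(K:ℝ))^β)) * (1/(K:ℝ))^α := by
    rw [Finset.sum_mul, ← Finset.sum_add_distrib]
    apply Finset.sum_le_sum
    intro j hj
    have hjK : j < K := Finset.mem_range.mp hj
    have hΔ : 0 ≤ (((j:ℝ)+1)/(K:ℝ))^β - ((j:ℝ)/(K:ℝ))^β := by
      have : ((j:ℝ)/(K:ℝ))^β ≤ (((j:ℝ)+1)/(K:ℝ))^β := by
        apply Real.rpow_le_rpow (by positivity) _ hβ.le
        gcongr
        linarith
      linarith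
    have hcast : ((K - j : ℕ):ℝ) = ((K - (j+1) : ℕ):ℝ) + 1 := by
      have : K - j = (K - (j+1)) + 1 := by omega
      rw [this]; push_cast; ring
    have hsplit : (((K - j : ℕ):ℝ)/(K:ℝ))^α
        ≤ (((K - (j+1) : ℕ):ℝ)/(K:ℝ))^α + (1/(K:ℝ))^α := by
      rw [hcast, add_div]
      exact my_rpow_subadd (by positivity) (by positivity) hα.le hα1.le
    calc ((((j:ℝ)+1)/(K:ℝ))^β - ((j:ℝ)/(K:ℝ))^β) * (((K - j : ℕ):ℝ)/(K:ℝ))^α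
        ≤ ((((j:ℝ)+1)/(K:ℝ))^β - ((j:ℝ)/(K:ℝ))^β)
            * ((((K - (j+1) : ℕ):ℝ)/(K:ℝ))^α + (1/(K:ℝ))^α) :=
          mul_le_mul_of_nonneg_left hsplit hΔ
      _ = _ := by ring
  -- step 2: telescoping sum equals 1
  have htel : ∑ j ∈ Finset.range K, ((((j:ℝ)+1)/(K:ℝ))^β - ((j:ℝ)/(K:ℝ))^β) = 1 := by
    have := Finset.sum_range_sub (fun j : ℕ => ((j:ℝ)/(K:ℝ))^β) K
    have h1 : ∑ j ∈ Finset.range K,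
        ((((j:ℝ)+1)/(K:ℝ))^β - ((j:ℝ)/(K:ℝ))^β)
        = (((K:ℕ):ℝ)/(K:ℝ))^β - (((0:ℕ):ℝ)/(K:ℝ))^β := by
      rw [← this]
      apply Finset.sum_congr rfl
      intro j _
      push_cast
      ring_nf
    rw [h1]
    rw [div_self hKR.ne', Real.one_rpow]
    norm_num
    exact Real.zero_rpow hβ.ne'
  -- step 3: each main term is at most an integral of f
  have hstep3 : ∀ j ∈ Finset.range K,
      ((((j:ℝ)+1)/(K:ℝ))^β - ((j:ℝ)/(K:ℝ))^β) * (((K - (j+1) : ℕ):ℝ)/(K:ℝ))^α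
        ≤ ∫ t in ((j:ℝ)/(K:ℝ))..(((j:ℝ)+1)/(K:ℝ)), f t := by
    intro j hj
    have hjK : j < K := Finset.mem_range.mp hj
    set w : ℝ := (((K - (j+1) : ℕ):ℝ)/(K:ℝ))^α with hw
    have hab : (j:ℝ)/(K:ℝ) ≤ ((j:ℝ)+1)/(K:ℝ) := by
      gcongr
      linarith
    have ha0 : (0:ℝ) ≤ (j:ℝ)/(K:ℝ) := by positivity
    have hb1 : ((j:ℝ)+1)/(K:ℝ) ≤ 1 := by
      rw [div_le_one hKR]
      have : (j:ℝ) + 1 ≤ (K:ℝ) := by exact_mod_cast hjK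
      linarith
    -- the base integral of β t^(β-1)
    have hbase : ∫ t in ((j:ℝ)/(K:ℝ))..(((j:ℝ)+1)/(K:ℝ)), β * t ^ (β - 1)
        = (((j:ℝ)+1)/(K:ℝ))^β - ((j:ℝ)/(K:ℝ))^β := by
      rw [intervalIntegral.integral_const_mul]
      rw [integral_rpow (Or.inl (by linarith : (-1:ℝ) < β - 1))]
      rw [show β - 1 + 1 = β by ring]
      field_simp
    have heq : ((((j:ℝ)+1)/(K:ℝ))^β - ((j:ℝ)/(K:ℝ))^β) * w
        = ∫ t in ((j:ℝ)/(K:ℝ))..(((j:ℝ)+1)/(K:ℝ)), (β * t ^ (β - 1)) * w := by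
      rw [intervalIntegral.integral_mul_const, hbase]
    rw [heq]
    have hint1 : IntervalIntegrable (fun t => (β * t ^ (β - 1)) * w) volume
        ((j:ℝ)/(K:ℝ)) (((j:ℝ)+1)/(K:ℝ)) := by
      exact ((intervalIntegral.intervalIntegrable_rpow'
        (by linarith : (-1:ℝ) < β - 1)).const_mul β).mul_const w
    have hint2 : IntervalIntegrable f volume ((j:ℝ)/(K:ℝ)) (((j:ℝ)+1)/(K:ℝ)) := by
      apply (my_integrable01 hα.le hβ).mono_set
      rw [Set.uIcc_of_le hab, Set.uIcc_of_le (by norm_num : (0:ℝ) ≤ 1)]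
      exact Set.Icc_subset_Icc ha0 hb1
    apply intervalIntegral.integral_mono_on hab hint1 hint2
    intro t ht
    obtain ⟨ht1, ht2⟩ := ht
    have ht0 : 0 ≤ t := le_trans ha0 ht1
    have hnn : 0 ≤ β * t ^ (β - 1) := by positivity
    have hwle : w ≤ (1 - t) ^ α := by
      rw [hw]
      apply Real.rpow_le_rpow (by positivity) _ hα.le
      have hc : ((K - (j+1) : ℕ):ℝ) = (K:ℝ) - ((j:ℝ)+1) := by
        rw [Nat.cast_sub (by omega)]; push_cast; ring
      rw [hc, div_le_iff₀ hKR]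
      have htK : t * (K:ℝ) ≤ (j:ℝ) + 1 := (le_div_iff₀ hKR).mp ht2
      nlinarith
    calc (β * t ^ (β - 1)) * w ≤ (β * t ^ (β - 1)) * ((1 - t) ^ α) :=
          mul_le_mul_of_nonneg_left hwle hnn
      _ = f t := by rw [hf]
  -- step 4: sum of integrals equals the full integral
  have hadj : ∑ j ∈ Finset.range K,
      (∫ t in ((j:ℝ)/(K:ℝ))..(((j:ℝ)+1)/(K:ℝ)), f t) = ∫ t in (0:ℝ)..1, f t := by
    have := intervalIntegral.sum_integral_adjacent_intervals
      (a := fun i : ℕ => (i:ℝ)/(K:ℝ)) (n := K) (f := f) (μ := volume) ?_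
    · have h0 : ((0:ℕ):ℝ)/(K:ℝ) = 0 := by norm_num
      have h1 : ((K:ℕ):ℝ)/(K:ℝ) = 1 := div_self hKR.ne'
      rw [h0, h1] at this
      rw [← this]
      apply Finset.sum_congr rfl
      intro j _
      congr 1
      push_cast
      ring
    · intro k hk
      apply (my_integrable01 hα.le hβ).mono_set
      have hab : ((k:ℕ):ℝ)/(K:ℝ) ≤ (((k+1):ℕ):ℝ)/(K:ℝ) := by
        gcongr
        exact_mod_cast Nat.le_succ k
      rw [Set.uIcc_of_le hab, Set.uIcc_of_le (by norm_num : (0:ℝ) ≤ 1)]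
      apply Set.Icc_subset_Icc (by positivity)
      rw [div_le_one hKR]
      exact_mod_cast hk
  -- step 5: evaluate the integral
  have hval : ∫ t in (0:ℝ)..1, f t
      = α * β * Real.Gamma α * Real.Gamma β / ((α+β) * Real.Gamma (α+β)) := by
    have h1 : ∫ t in (0:ℝ)..1, f t = β * ∫ t in (0:ℝ)..1, t ^ (β-1) * (1-t) ^ ((α+1)-1) := by
      rw [← intervalIntegral.integral_const_mul]
      apply intervalIntegral.integral_congr
      intro t _
      show f t = β * (t ^ (β-1) * (1-t) ^ ((α+1)-1))
      rw [hf, show (α+1)-1 = α by ring]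
      ring
    rw [h1, my_real_beta hβ (by linarith : (0:ℝ) < α + 1)]
    rw [Real.Gamma_add_one hα.ne', show β + (α+1) = (β+α)+1 by ring,
      Real.Gamma_add_one (by linarith : β + α ≠ 0), add_comm β α]
    have hG : Real.Gamma (α+β) ≠ 0 := (Real.Gamma_pos_of_pos (by linarith)).ne'
    field_simp
  calc ∑ j ∈ Finset.range K,
        ((((j:ℝ)+1)/(K:ℝ))^β - ((j:ℝ)/(K:ℝ))^β) * (((K - j : ℕ):ℝ)/(K:ℝ))^α
      ≤ (∑ j ∈ Finset.range K,
          ((((j:ℝ)+1)/(K:ℝ))^β - ((j:ℝ)/(K:ℝ))^β) * (((K - (j+1) : ℕ):ℝ)/(K:ℝ))^α)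
        + (∑ j ∈ Finset.range K,
          ((((j:ℝ)+1)/(K:ℝ))^β - ((j:ℝ)/(K:ℝ))^β)) * (1/(K:ℝ))^α := hstep1
    _ ≤ (∑ j ∈ Finset.range K,
          (∫ t in ((j:ℝ)/(K:ℝ))..(((j:ℝ)+1)/(K:ℝ)), f t)) + 1 * (1/(K:ℝ))^α := by
        apply add_le_add
        · exact Finset.sum_le_sum hstep3
        · rw [htel]
    _ = α * β * Real.Gamma α * Real.Gamma β / ((α+β) * Real.Gamma (α+β)) + (1/(K:ℝ))^α := by
        rw [hadj, hval, one_mul]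
lemma my_num {a b C0 M ε ε' κ : ℝ} (ha : 0 < a) (hb : 0 < b) (hC0 : 0 < C0)
    (hM : M = (a+1)*(b+1)) (hε : 0 < ε) (hε'pos : 0 < ε') (hε'1 : ε' ≤ 1)
    (hε'2 : ε' * (2 * C0 * (a + b + 1)) ≤ ε) (hκ0 : 0 ≤ κ) (hκ : κ * (2*M) ≤ ε) :
    (a+ε') * (b+ε') * (C0 + κ) ≤ a * b * C0 + ε := by
  have hab1 : (a+ε') * (b+ε') ≤ M := by rw [hM]; nlinarith
  have hsq : ε' * ε' ≤ ε' := by nlinarith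
  have h1 : (a+ε') * (b+ε') * κ ≤ ε/2 := by
    nlinarith [mul_le_mul_of_nonneg_right hab1 hκ0]
  have h2 : (a+ε') * (b+ε') * C0 ≤ a*b*C0 + ε/2 := by
    nlinarith [mul_le_mul_of_nonneg_left hsq hC0.le]
  nlinarith

set_option maxHeartbeats 1000000 in
/-- If A(N) ≤ (a+o(1))N^α and B(N) ≤ (b+o(1))N^β, then the number of
pairs (x,y) ∈ A × B with x + y ≤ N is at most
((a·b·α·β·Γ(α)Γ(β))/((α+β)Γ(α+β)) + o(1))·N^(α+β). -/
theorem stmt0 (A B : Set ℕ) (hA0 : ∀ n ∈ A, 0 < n) (hB0 : ∀ n ∈ B, 0 < n)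
    (a b α β : ℝ) (ha : 0 < a) (hb : 0 < b)
    (hα : 0 < α) (hα1 : α < 1) (hβ : 0 < β) (hβ1 : β < 1)
    (hAcount : ∀ ε > 0, ∃ N₀ : ℕ, ∀ N ≥ N₀,
      ((A ∩ Set.Icc 1 N).ncard : ℝ) ≤ (a + ε) * (N : ℝ) ^ α)
    (hBcount : ∀ ε > 0, ∃ N₀ : ℕ, ∀ N ≥ N₀,
      ((B ∩ Set.Icc 1 N).ncard : ℝ) ≤ (b + ε) * (N : ℝ) ^ β) :
    ∀ ε > 0, ∃ N₀ : ℕ, ∀ N ≥ N₀,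
      (({p : ℕ × ℕ | p.1 ∈ A ∧ p.2 ∈ B ∧ p.1 + p.2 ≤ N}).ncard : ℝ) ≤
        (a * b * α * β * Real.Gamma α * Real.Gamma β /
          ((α + β) * Real.Gamma (α + β)) + ε) * (N : ℝ) ^ (α + β) := by
  classical
  intro ε hε
  have hGα := Real.Gamma_pos_of_pos hα
  have hGβ := Real.Gamma_pos_of_pos hβ
  have hGαβ := Real.Gamma_pos_of_pos (by linarith : (0:ℝ) < α + β)
  set C0 : ℝ := α * β * Real.Gamma α * Real.Gamma β / ((α+β) * Real.Gamma (α+β)) with hC0def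
  have hC0 : 0 < C0 := by rw [hC0def]; positivity
  set ε' : ℝ := min 1 (ε / (2 * C0 * (a + b + 1))) with hε'def
  have hε'pos : 0 < ε' := lt_min one_pos (by positivity)
  have hε'1 : ε' ≤ 1 := min_le_left _ _
  have hε'2 : ε' * (2 * C0 * (a + b + 1)) ≤ ε := by
    have h := min_le_right 1 (ε / (2 * C0 * (a + b + 1)))
    rw [← hε'def] at h
    rw [← le_div_iff₀ (by positivity)]
    exact h
  set M : ℝ := (a+1)*(b+1) with hMdef
  have hM : 0 < M := by positivity
  -- choose K
  obtain ⟨K, hK1, hKbig⟩ : ∃ K : ℕ, 0 < K ∧ (1/(K:ℝ))^α ≤ ε/(2*M) := by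
    refine ⟨⌈(2*M/ε) ^ (α⁻¹)⌉₊ + 1, Nat.succ_pos _, ?_⟩
    set K := ⌈(2*M/ε) ^ (α⁻¹)⌉₊ + 1 with hKdef
    have hKR : (0:ℝ) < (K:ℕ) := by positivity
    have h1 : (2*M/ε) ^ (α⁻¹) ≤ ((K:ℕ):ℝ) := by
      rw [hKdef]; push_cast
      linarith [Nat.le_ceil ((2*M/ε) ^ (α⁻¹))]
    have h2 : 2*M/ε ≤ ((K:ℕ):ℝ) ^ α := by
      calc 2*M/ε = ((2*M/ε) ^ (α⁻¹)) ^ α := (Real.rpow_inv_rpow (by positivity) hα.ne').symm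
        _ ≤ _ := Real.rpow_le_rpow (by positivity) h1 hα.le
    have hKα : (0:ℝ) < ((K:ℕ):ℝ) ^ α := Real.rpow_pos_of_pos hKR α
    rw [Real.div_rpow zero_le_one hKR.le, Real.one_rpow]
    rw [div_le_div_iff₀ hKα (by positivity)]
    rw [div_le_iff₀ (by positivity : (0:ℝ) < ε)] at h2
    nlinarith
  obtain ⟨N₁, hN₁⟩ := hAcount ε' hε'pos
  obtain ⟨N₂, hN₂⟩ := hBcount ε' hε'pos
  refine ⟨K * (N₁ + N₂ + 1), ?_⟩
  intro N hN
  have hNge1 : 1 ≤ N := by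
    have h1 : 1 ≤ K * (N₁ + N₂ + 1) := Nat.one_le_iff_ne_zero.mpr
      (Nat.mul_ne_zero hK1.ne' (by omega))
    omega
  set NR : ℝ := (N : ℝ) with hNRdef
  set KR : ℝ := (K : ℝ) with hKRdef
  have hNR : (0:ℝ) < NR := by rw [hNRdef]; exact_mod_cast hNge1
  have hKR : (0:ℝ) < KR := by rw [hKRdef]; exact_mod_cast hK1
  have hNKr : ((N₁:ℝ) + N₂ + 1) ≤ NR / KR := by
    rw [le_div_iff₀ hKR]
    have : ((K * (N₁ + N₂ + 1) : ℕ) : ℝ) ≤ NR := by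
      rw [hNRdef]; exact_mod_cast hN
    push_cast at this ⊢
    nlinarith
  have hNKpos : 0 ≤ NR / KR := by positivity
  have hthresh : ∀ x : ℝ, 1 ≤ x → NR / KR ≤ x * NR / KR := by
    intro x hx
    rw [mul_div_assoc]
    exact le_mul_of_one_le_left hNKpos hx
  have hthreshA : ∀ x : ℝ, 1 ≤ x → (N₁:ℝ) ≤ x * NR / KR := by
    intro x hx
    have h2 : (0:ℝ) ≤ (N₂:ℝ) := Nat.cast_nonneg _
    linarith [hthresh x hx, hNKr]
  have hthreshB : ∀ x : ℝ, 1 ≤ x → (N₂:ℝ) ≤ x * NR / KR := by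
    intro x hx
    have h2 : (0:ℝ) ≤ (N₁:ℝ) := Nat.cast_nonneg _
    linarith [hthresh x hx, hNKr]
  -- counting bounds from hypotheses
  have hBbound : ∀ r : ℝ, (N₂:ℝ) ≤ r →
      ((((Finset.Icc 1 N).filter (fun y => y ∈ B ∧ (y:ℝ) ≤ r)).card : ℝ))
        ≤ (b+ε') * r ^ β := by
    intro r hr
    have hr0 : (0:ℝ) ≤ r := le_trans (Nat.cast_nonneg _) hr
    have hsub : (Finset.Icc 1 N).filter (fun y => y ∈ B ∧ (y:ℝ) ≤ r)
        ⊆ (Finset.Icc 1 ⌊r⌋₊).filter (fun y => y ∈ B) := by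
      intro y hy
      simp only [Finset.mem_filter, Finset.mem_Icc] at hy ⊢
      exact ⟨⟨hy.1.1, Nat.le_floor hy.2.2⟩, hy.2.1⟩
    have hcard := Finset.card_le_card hsub
    have hncard : (B ∩ Set.Icc 1 ⌊r⌋₊).ncard
        = ((Finset.Icc 1 ⌊r⌋₊).filter (fun y => y ∈ B)).card := by
      rw [← Set.ncard_coe_finset]
      congr 1
      ext y
      simp only [Finset.coe_filter, Finset.mem_Icc, Set.mem_inter_iff, Set.mem_Icc,
        Set.mem_setOf_eq]
      tauto
    have hfloor : N₂ ≤ ⌊r⌋₊ := Nat.le_floor hr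
    have hb1 := hN₂ ⌊r⌋₊ hfloor
    rw [hncard] at hb1
    calc ((((Finset.Icc 1 N).filter (fun y => y ∈ B ∧ (y:ℝ) ≤ r)).card : ℝ))
        ≤ ((((Finset.Icc 1 ⌊r⌋₊).filter (fun y => y ∈ B)).card : ℝ)) := by exact_mod_cast hcard
      _ ≤ (b+ε') * ((⌊r⌋₊:ℝ)) ^ β := hb1
      _ ≤ (b+ε') * r ^ β := by
          apply mul_le_mul_of_nonneg_left _ (by linarith)
          exact Real.rpow_le_rpow (Nat.cast_nonneg _) (Nat.floor_le hr0) hβ.le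
  have hAbound : ∀ r : ℝ, (N₁:ℝ) ≤ r →
      ((((Finset.Icc 1 N).filter (fun x => x ∈ A ∧ (x:ℝ) ≤ r)).card : ℝ))
        ≤ (a+ε') * r ^ α := by
    intro r hr
    have hr0 : (0:ℝ) ≤ r := le_trans (Nat.cast_nonneg _) hr
    have hsub : (Finset.Icc 1 N).filter (fun x => x ∈ A ∧ (x:ℝ) ≤ r)
        ⊆ (Finset.Icc 1 ⌊r⌋₊).filter (fun x => x ∈ A) := by
      intro x hx
      simp only [Finset.mem_filter, Finset.mem_Icc] at hx ⊢
      exact ⟨⟨hx.1.1, Nat.le_floor hx.2.2⟩, hx.2.1⟩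
    have hcard := Finset.card_le_card hsub
    have hncard : (A ∩ Set.Icc 1 ⌊r⌋₊).ncard
        = ((Finset.Icc 1 ⌊r⌋₊).filter (fun x => x ∈ A)).card := by
      rw [← Set.ncard_coe_finset]
      congr 1
      ext x
      simp only [Finset.coe_filter, Finset.mem_Icc, Set.mem_inter_iff, Set.mem_Icc,
        Set.mem_setOf_eq]
      tauto
    have hfloor : N₁ ≤ ⌊r⌋₊ := Nat.le_floor hr
    have ha1 := hN₁ ⌊r⌋₊ hfloor
    rw [hncard] at ha1
    calc ((((Finset.Icc 1 N).filter (fun x => x ∈ A ∧ (x:ℝ) ≤ r)).card : ℝ))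
        ≤ ((((Finset.Icc 1 ⌊r⌋₊).filter (fun x => x ∈ A)).card : ℝ)) := by exact_mod_cast hcard
      _ ≤ (a+ε') * ((⌊r⌋₊:ℝ)) ^ α := ha1
      _ ≤ (a+ε') * r ^ α := by
          apply mul_le_mul_of_nonneg_left _ (by linarith)
          exact Real.rpow_le_rpow (Nat.cast_nonneg _) (Nat.floor_le hr0) hα.le
  -- the finite set of pairs
  set Pfin : Finset (ℕ × ℕ) := (Finset.Icc 1 N ×ˢ Finset.Icc 1 N).filter
      (fun p => p.1 ∈ A ∧ p.2 ∈ B ∧ p.1 + p.2 ≤ N) with hPfin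
  have hPcard : ({p : ℕ × ℕ | p.1 ∈ A ∧ p.2 ∈ B ∧ p.1 + p.2 ≤ N}).ncard = Pfin.card := by
    rw [← Set.ncard_coe_finset]
    congr 1
    ext p
    simp only [hPfin, Finset.coe_filter, Finset.mem_product, Finset.mem_Icc,
      Set.mem_setOf_eq]
    constructor
    · rintro ⟨h1, h2, h3⟩
      exact ⟨⟨⟨hA0 _ h1, by omega⟩, ⟨hB0 _ h2, by omega⟩⟩, h1, h2, h3⟩
    · rintro ⟨-, h⟩
      exact h
  -- counting functions
  set F : ℕ → ℝ := fun j => (((Finset.Icc 1 N).filter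
      (fun y => y ∈ B ∧ (y:ℝ) ≤ (j:ℝ) * NR / KR)).card : ℝ) with hF
  set G : ℕ → ℝ := fun j => (((Finset.Icc 1 N).filter
      (fun x => x ∈ A ∧ (x:ℝ) ≤ ((K + 1 - j : ℕ):ℝ) * NR / KR)).card : ℝ) with hG
  set Ablk : ℕ → Finset ℕ := fun j => (Finset.Icc 1 N).filter
      (fun x => x ∈ A ∧ (x:ℝ) ≤ ((K - j : ℕ):ℝ) * NR / KR) with hAblk
  set Bblk : ℕ → Finset ℕ := fun j => (Finset.Icc 1 N).filter
      (fun y => y ∈ B ∧ (j:ℝ) * NR / KR < (y:ℝ) ∧ (y:ℝ) ≤ ((j:ℝ)+1) * NR / KR) with hBblk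
  have hF0 : F 0 = 0 := by
    simp only [hF]
    norm_num
    intro y hy _ _
    omega
  have hGK1 : G (K+1) = 0 := by
    simp only [hG]
    norm_num
    intro x hx _ _
    omega
  -- covering
  have hcover : Pfin ⊆ (Finset.range K).biUnion (fun j => Ablk j ×ˢ Bblk j) := by
    intro p hp
    simp only [hPfin, Finset.mem_filter, Finset.mem_product, Finset.mem_Icc] at hp
    obtain ⟨⟨⟨hx1, hxN⟩, hy1, hyN⟩, hxA, hyB, hsum⟩ := hp
    have hy0 : (0:ℝ) < (p.2:ℝ) := by exact_mod_cast hy1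
    set c : ℝ := (p.2:ℝ) * KR / NR with hc
    have hc0 : 0 < c := by positivity
    set m : ℕ := ⌈c⌉₊ with hm
    have hm1 : 1 ≤ m := Nat.one_le_ceil_iff.mpr hc0
    have hmK : m ≤ K := by
      apply Nat.ceil_le.mpr
      rw [hc, div_le_iff₀ hNR]
      have h2 : (p.2:ℝ) ≤ NR := by rw [hNRdef]; exact_mod_cast hyN
      nlinarith
    set j : ℕ := m - 1 with hj
    have hjm : (j:ℝ) = (m:ℝ) - 1 := by
      rw [hj, Nat.cast_sub hm1]; norm_num
    have hjK : j < K := by omega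
    have hylow : (j:ℝ) * NR / KR < (p.2:ℝ) := by
      have h1 : (j:ℝ) < c := Nat.lt_ceil.mp (by omega)
      rw [hc, lt_div_iff₀ hNR] at h1
      rw [div_lt_iff₀ hKR]
      linarith
    have hyup : (p.2:ℝ) ≤ ((j:ℝ)+1) * NR / KR := by
      have h1 : c ≤ (m:ℝ) := Nat.le_ceil c
      rw [hc, div_le_iff₀ hNR] at h1
      rw [hjm]
      rw [le_div_iff₀ hKR]
      nlinarith
    have hxle : (p.1:ℝ) ≤ ((K - j : ℕ):ℝ) * NR / KR := by
      have hcastKj : ((K - j : ℕ):ℝ) = KR - (j:ℝ) := by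
        rw [Nat.cast_sub (by omega), hKRdef]
      have hsum' : (p.1:ℝ) + (p.2:ℝ) ≤ NR := by
        rw [hNRdef]; exact_mod_cast hsum
      have he : (KR - (j:ℝ)) * NR / KR = NR - (j:ℝ)*NR/KR := by
        field_simp
      rw [hcastKj, he]
      linarith
    apply Finset.mem_biUnion.mpr
    refine ⟨j, Finset.mem_range.mpr hjK, ?_⟩
    rw [Finset.mem_product]
    constructor
    · simp only [hAblk, Finset.mem_filter, Finset.mem_Icc]
      exact ⟨⟨hx1, hxN⟩, hxA, hxle⟩
    · simp only [hBblk, Finset.mem_filter, Finset.mem_Icc]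
      exact ⟨⟨hy1, hyN⟩, hyB, hylow, hyup⟩
  -- block cards
  have hAblkcard : ∀ j, ((Ablk j).card : ℝ) = G (j+1) := by
    intro j
    simp only [hG, hAblk]
    have he : K + 1 - (j+1) = K - j := by omega
    simp only [he]
  have hFmono : ∀ j, F j ≤ F (j+1) := by
    intro j
    simp only [hF]
    have : (Finset.Icc 1 N).filter (fun y => y ∈ B ∧ (y:ℝ) ≤ (j:ℝ) * NR / KR)
        ⊆ (Finset.Icc 1 N).filter (fun y => y ∈ B ∧ (y:ℝ) ≤ ((j+1:ℕ):ℝ) * NR / KR) := by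
      intro y hy
      simp only [Finset.mem_filter] at hy ⊢
      refine ⟨hy.1, hy.2.1, le_trans hy.2.2 ?_⟩
      have hj1 : (j:ℝ) ≤ ((j+1:ℕ):ℝ) := by push_cast; linarith
      rw [mul_div_assoc, mul_div_assoc]
      exact mul_le_mul_of_nonneg_right hj1 hNKpos
    exact_mod_cast Finset.card_le_card this
  have hBblkcard : ∀ j, ((Bblk j).card : ℝ) = F (j+1) - F j := by
    intro j
    have hunion : (Finset.Icc 1 N).filter (fun y => y ∈ B ∧ (y:ℝ) ≤ ((j+1:ℕ):ℝ) * NR / KR)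
        = ((Finset.Icc 1 N).filter (fun y => y ∈ B ∧ (y:ℝ) ≤ (j:ℝ) * NR / KR)) ∪ Bblk j := by
      rw [hBblk, ← Finset.filter_or]
      apply Finset.filter_congr
      intro y _
      have hcast : ((j+1:ℕ):ℝ) = (j:ℝ) + 1 := by push_cast; ring
      rw [hcast]
      constructor
      · rintro ⟨hyB', hyle⟩
        by_cases hcase : (y:ℝ) ≤ (j:ℝ) * NR / KR
        · exact Or.inl ⟨hyB', hcase⟩
        · exact Or.inr ⟨hyB', lt_of_not_ge hcase, hyle⟩
      · rintro (⟨hyB', hyle⟩ | ⟨hyB', _, hyle⟩)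
        · refine ⟨hyB', le_trans hyle ?_⟩
          rw [mul_div_assoc, mul_div_assoc]
          have hj1 : (j:ℝ) ≤ (j:ℝ) + 1 := by linarith
          exact mul_le_mul_of_nonneg_right hj1 hNKpos
        · exact ⟨hyB', hyle⟩
    have hdisj : Disjoint
        ((Finset.Icc 1 N).filter (fun y => y ∈ B ∧ (y:ℝ) ≤ (j:ℝ) * NR / KR)) (Bblk j) := by
      rw [Finset.disjoint_left]
      intro y hy1 hy2
      simp only [Finset.mem_filter] at hy1
      simp only [hBblk, Finset.mem_filter] at hy2
      linarith [hy1.2.2, hy2.2.2.1]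
    have hcards : F (j+1) = F j + ((Bblk j).card : ℝ) := by
      simp only [hF]
      have h2 := Finset.card_union_of_disjoint hdisj
      rw [← hunion] at h2
      exact_mod_cast h2
    linarith
  -- main chain of inequalities
  have step1 : ((Pfin.card : ℕ) : ℝ) ≤ ∑ j ∈ Finset.range K, (F (j+1) - F j) * G (j+1) := by
    have h1 : Pfin.card ≤ ∑ j ∈ Finset.range K, ((Ablk j).card * (Bblk j).card) := by
      calc Pfin.card ≤ ((Finset.range K).biUnion (fun j => Ablk j ×ˢ Bblk j)).card :=
            Finset.card_le_card hcover
        _ ≤ ∑ j ∈ Finset.range K, (Ablk j ×ˢ Bblk j).card := Finset.card_biUnion_le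
        _ = ∑ j ∈ Finset.range K, ((Ablk j).card * (Bblk j).card) := by
            apply Finset.sum_congr rfl
            intro j _
            exact Finset.card_product _ _
    calc ((Pfin.card : ℕ) : ℝ)
        ≤ ((∑ j ∈ Finset.range K, ((Ablk j).card * (Bblk j).card) : ℕ) : ℝ) := by
          exact_mod_cast h1
      _ = ∑ j ∈ Finset.range K, ((Ablk j).card : ℝ) * ((Bblk j).card : ℝ) := by
          push_cast; ring
      _ = ∑ j ∈ Finset.range K, (F (j+1) - F j) * G (j+1) := by
          apply Finset.sum_congr rfl
          intro j _
          rw [hAblkcard j, hBblkcard j]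
          ring
  have step2 : ∑ j ∈ Finset.range K, (F (j+1) - F j) * G (j+1)
      = ∑ j ∈ Finset.range K, F (j+1) * (G (j+1) - G (j+2)) := my_abel K F G hF0 hGK1
  -- G is antitone
  have hGmono : ∀ j, G (j+2) ≤ G (j+1) := by
    intro j
    simp only [hG]
    have hle : ((K + 1 - (j+2) : ℕ):ℝ) ≤ ((K + 1 - (j+1) : ℕ):ℝ) := by
      have : (K + 1 - (j+2) : ℕ) ≤ (K + 1 - (j+1) : ℕ) := by omega
      exact_mod_cast this
    have : (Finset.Icc 1 N).filter (fun x => x ∈ A ∧ (x:ℝ) ≤ ((K + 1 - (j+2) : ℕ):ℝ) * NR / KR)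
        ⊆ (Finset.Icc 1 N).filter (fun x => x ∈ A ∧ (x:ℝ) ≤ ((K + 1 - (j+1) : ℕ):ℝ) * NR / KR) := by
      intro x hx
      simp only [Finset.mem_filter] at hx ⊢
      refine ⟨hx.1, hx.2.1, le_trans hx.2.2 ?_⟩
      rw [mul_div_assoc, mul_div_assoc]
      exact mul_le_mul_of_nonneg_right hle hNKpos
    exact_mod_cast Finset.card_le_card this
  -- replace F by its upper bound
  set Bb : ℕ → ℝ := fun j => (b+ε') * ((j:ℝ) * NR / KR) ^ β with hBb
  have hFle : ∀ j, F j ≤ Bb j := by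
    intro j
    rcases Nat.eq_zero_or_pos j with rfl | hj
    · rw [hF0, hBb]
      norm_num
      positivity
    · rw [hF, hBb]
      apply hBbound
      apply hthreshB
      exact_mod_cast hj
  have step3 : ∑ j ∈ Finset.range K, F (j+1) * (G (j+1) - G (j+2))
      ≤ ∑ j ∈ Finset.range K, Bb (j+1) * (G (j+1) - G (j+2)) := by
    apply Finset.sum_le_sum
    intro j _
    apply mul_le_mul_of_nonneg_right (hFle (j+1))
    linarith [hGmono j]
  have hBb0 : Bb 0 = 0 := by
    simp only [hBb, Nat.cast_zero, zero_mul, zero_div, Real.zero_rpow hβ.ne', mul_zero]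
  have step4 : ∑ j ∈ Finset.range K, Bb (j+1) * (G (j+1) - G (j+2))
      = ∑ j ∈ Finset.range K, (Bb (j+1) - Bb j) * G (j+1) := (my_abel K Bb G hBb0 hGK1).symm
  -- replace G by its upper bound
  have hBbmono : ∀ j, Bb j ≤ Bb (j+1) := by
    intro j
    simp only [hBb]
    apply mul_le_mul_of_nonneg_left _ (by linarith)
    apply Real.rpow_le_rpow (by positivity) _ hβ.le
    have hj1 : (j:ℝ) ≤ ((j+1:ℕ):ℝ) := by push_cast; linarith
    rw [mul_div_assoc, mul_div_assoc]
    exact mul_le_mul_of_nonneg_right hj1 hNKpos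
  set Ab : ℕ → ℝ := fun j => (a+ε') * (((K - j : ℕ):ℝ) * NR / KR) ^ α with hAb
  have hGle : ∀ j ∈ Finset.range K, G (j+1) ≤ Ab j := by
    intro j hj
    have hjK : j < K := Finset.mem_range.mp hj
    simp only [hG, hAb]
    have he : K + 1 - (j+1) = K - j := by omega
    simp only [he]
    apply hAbound
    apply hthreshA
    have : (1:ℕ) ≤ K - j := by omega
    exact_mod_cast this
  have step5 : ∑ j ∈ Finset.range K, (Bb (j+1) - Bb j) * G (j+1)
      ≤ ∑ j ∈ Finset.range K, (Bb (j+1) - Bb j) * Ab j := by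
    apply Finset.sum_le_sum
    intro j hj
    apply mul_le_mul_of_nonneg_left (hGle j hj)
    linarith [hBbmono j]
  -- rewrite in normalized form
  have step6 : ∑ j ∈ Finset.range K, (Bb (j+1) - Bb j) * Ab j
      = (a+ε') * (b+ε') * NR ^ (α+β) *
        ∑ j ∈ Finset.range K,
          ((((j:ℝ)+1)/KR)^β - ((j:ℝ)/KR)^β) * (((K - j : ℕ):ℝ)/KR)^α := by
    rw [Finset.mul_sum]
    apply Finset.sum_congr rfl
    intro j _
    simp only [hBb, hAb]
    have e1 : ((j+1:ℕ):ℝ) * NR / KR = (((j:ℝ)+1)/KR) * NR := by push_cast; ring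
    have e2 : (j:ℝ) * NR / KR = ((j:ℝ)/KR) * NR := by ring
    have e3 : ((K - j : ℕ):ℝ) * NR / KR = (((K - j : ℕ):ℝ)/KR) * NR := by ring
    rw [e1, e2, e3]
    rw [Real.mul_rpow (by positivity) hNR.le, Real.mul_rpow (by positivity) hNR.le,
      Real.mul_rpow (by positivity) hNR.le]
    have hadd : NR ^ (α+β) = NR ^ α * NR ^ β := Real.rpow_add hNR α β
    rw [hadd]
    ring
  -- analytic bound
  have step7 : ∑ j ∈ Finset.range K,
        ((((j:ℝ)+1)/KR)^β - ((j:ℝ)/KR)^β) * (((K - j : ℕ):ℝ)/KR)^α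
      ≤ C0 + (1/KR)^α := by
    rw [hC0def, hKRdef]
    exact my_sum_T_le hα hα1 hβ hβ1 K hK1
  -- final numeric estimate
  have hnum : (a+ε') * (b+ε') * (C0 + (1/KR)^α) ≤ a * b * C0 + ε := by
    have hκ0 : (0:ℝ) ≤ (1/KR)^α := Real.rpow_nonneg (by positivity) α
    have hκ : (1/KR)^α * (2*M) ≤ ε := (le_div_iff₀ (by positivity)).mp hKbig
    exact my_num ha hb hC0 hMdef hε hε'pos hε'1 hε'2 hκ0 hκ
  -- put everything together
  rw [hPcard]
  have hfinal : ((Pfin.card : ℕ) : ℝ) ≤ (a * b * C0 + ε) * NR ^ (α+β) := by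
    have hTnonneg : (0:ℝ) ≤ NR ^ (α+β) := Real.rpow_nonneg hNR.le _
    calc ((Pfin.card : ℕ) : ℝ)
        ≤ ∑ j ∈ Finset.range K, (F (j+1) - F j) * G (j+1) := step1
      _ = ∑ j ∈ Finset.range K, F (j+1) * (G (j+1) - G (j+2)) := step2
      _ ≤ ∑ j ∈ Finset.range K, Bb (j+1) * (G (j+1) - G (j+2)) := step3
      _ = ∑ j ∈ Finset.range K, (Bb (j+1) - Bb j) * G (j+1) := step4
      _ ≤ ∑ j ∈ Finset.range K, (Bb (j+1) - Bb j) * Ab j := step5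
      _ = (a+ε') * (b+ε') * NR ^ (α+β) *
          ∑ j ∈ Finset.range K,
            ((((j:ℝ)+1)/KR)^β - ((j:ℝ)/KR)^β) * (((K - j : ℕ):ℝ)/KR)^α := step6
      _ ≤ (a+ε') * (b+ε') * NR ^ (α+β) * (C0 + (1/KR)^α) := by
          apply mul_le_mul_of_nonneg_left step7
          positivity
      _ = (a+ε') * (b+ε') * (C0 + (1/KR)^α) * NR ^ (α+β) := by ring
      _ ≤ (a * b * C0 + ε) * NR ^ (α+β) := by
          apply mul_le_mul_of_nonneg_right hnum hTnonneg
  calc ((Pfin.card : ℕ) : ℝ) ≤ (a * b * C0 + ε) * NR ^ (α+β) := hfinal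
    _ = (a * b * α * β * Real.Gamma α * Real.Gamma β /
          ((α + β) * Real.Gamma (α + β)) + ε) * (N : ℝ) ^ (α + β) := by
        rw [hC0def, hNRdef]
        ring
end

section
/- If A is a Sidon set of positive integers, then the upper asymptotic density of A + A is at most 1/2. -/
set_option maxHeartbeats 1000000

open Pointwise Filter Finset

open scoped Classical in
lemma sidon_ET_aux (A : Set ℕ)
    (hSidon : ∀ a ∈ A, ∀ b ∈ A, ∀ c ∈ A, ∀ d ∈ A,
      a + b = c + d → (a = c ∧ b = d) ∨ (a = d ∧ b = c))
    (n t : ℕ) (ht : 0 < t) :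
    ((Finset.Icc 1 n).filter (· ∈ A)).card ^ 2 * t
      ≤ (n + t) * (((Finset.Icc 1 n).filter (· ∈ A)).card + t) := by
  set F : Finset ℕ := (Finset.Icc 1 n).filter (· ∈ A) with hF
  set F' : Finset ℕ := F.image (· + t) with hF'
  have hcard : F'.card = F.card := Finset.card_image_of_injective _ (add_left_injective t)
  have hmem : ∀ b ∈ F', t + 1 ≤ b ∧ b ≤ n + t ∧ ∃ a ∈ A, b = a + t := by
    intro b hb
    obtain ⟨a, ha, rfl⟩ := Finset.mem_image.1 hb
    rw [hF, Finset.mem_filter, Finset.mem_Icc] at ha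
    exact ⟨by omega, by omega, a, ha.2, rfl⟩
  have hS' : ∀ x ∈ F', ∀ y ∈ F', ∀ z ∈ F', ∀ w ∈ F',
      x + y = z + w → (x = z ∧ y = w) ∨ (x = w ∧ y = z) := by
    intro x hx y hy z hz w hw hxy
    obtain ⟨-, -, a, ha, rfl⟩ := hmem x hx
    obtain ⟨-, -, b, hb, rfl⟩ := hmem y hy
    obtain ⟨-, -, c, hc, rfl⟩ := hmem z hz
    obtain ⟨-, -, d, hd, rfl⟩ := hmem w hw
    rcases hSidon a ha b hb c hc d hd (by omega) with ⟨h1, h2⟩ | ⟨h1, h2⟩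
    · exact Or.inl ⟨by omega, by omega⟩
    · exact Or.inr ⟨by omega, by omega⟩
  set W : ℕ → Finset ℕ := fun j => Finset.Icc (j + 1) (j + t) with hW
  set g : ℕ → ℕ := fun j => (F'.filter (· ∈ W j)).card with hg
  -- Claim 1
  have claim1 : ∑ j ∈ Finset.range (n + t), g j = t * F'.card := by
    have hgj : ∀ j, g j = ∑ b ∈ F', if b ∈ W j then 1 else 0 := fun j => Finset.card_filter _ _
    have hcount : ∀ b ∈ F', (∑ j ∈ Finset.range (n + t), if b ∈ W j then 1 else 0) = t := by
      intro b hb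
      obtain ⟨hb1, hb2, -⟩ := hmem b hb
      have e1 : (∑ j ∈ Finset.range (n + t), if b ∈ W j then 1 else 0)
          = ((Finset.range (n + t)).filter (fun j => b ∈ W j)).card :=
        (Finset.card_filter _ _).symm
      have e2 : (Finset.range (n + t)).filter (fun j => b ∈ W j)
          = Finset.Icc (b - t) (b - 1) := by
        ext j
        simp only [Finset.mem_filter, Finset.mem_range, hW, Finset.mem_Icc]
        omega
      rw [e1, e2, Nat.card_Icc]
      omega
    calc ∑ j ∈ Finset.range (n + t), g j
        = ∑ j ∈ Finset.range (n + t), ∑ b ∈ F', if b ∈ W j then 1 else 0 := by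
          exact Finset.sum_congr rfl fun j _ => hgj j
      _ = ∑ b ∈ F', ∑ j ∈ Finset.range (n + t), if b ∈ W j then 1 else 0 := Finset.sum_comm
      _ = ∑ b ∈ F', t := Finset.sum_congr rfl hcount
      _ = t * F'.card := by rw [Finset.sum_const, smul_eq_mul, mul_comm]
  -- Claim 2
  have claim2 : ∑ j ∈ Finset.range (n + t), (F'.filter (· ∈ W j)).offDiag.card ≤ t * t := by
    set D : Finset (ℕ × ℕ) := (F' ×ˢ F').filter (fun p => p.1 ≠ p.2) with hD
    have hsplit : ∀ j, (F'.filter (· ∈ W j)).offDiag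
        = D.filter (fun p => p.1 ∈ W j ∧ p.2 ∈ W j) := by
      intro j
      ext ⟨a, b⟩
      simp only [Finset.mem_offDiag, Finset.mem_filter, hD, Finset.mem_product]
      tauto
    simp only [hsplit]
    have hcf : ∀ j, (D.filter (fun p => p.1 ∈ W j ∧ p.2 ∈ W j)).card
        = ∑ p ∈ D, if p.1 ∈ W j ∧ p.2 ∈ W j then 1 else 0 := fun j => Finset.card_filter _ _
    simp only [hcf]
    rw [Finset.sum_comm]
    set w : ℕ × ℕ → ℕ :=
      fun p => ((Finset.range (n + t)).filter (fun j => p.1 ∈ W j ∧ p.2 ∈ W j)).card with hw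
    have hwsum : ∀ p, ∑ j ∈ Finset.range (n + t), (if p.1 ∈ W j ∧ p.2 ∈ W j then 1 else 0) = w p :=
      fun p => (Finset.card_filter _ _).symm
    simp only [hwsum]
    -- split D into p.1 < p.2 and p.2 < p.1
    set Dp : Finset (ℕ × ℕ) := D.filter (fun p => p.1 < p.2) with hDp
    have hDsplit : ∑ p ∈ D, w p = ∑ p ∈ Dp, w p + ∑ p ∈ D.filter (fun p => ¬ p.1 < p.2), w p :=
      (Finset.sum_filter_add_sum_filter_not D _ w).symm
    have himg : D.filter (fun p => ¬ p.1 < p.2) = Dp.image Prod.swap := by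
      ext ⟨a, b⟩
      simp only [Finset.mem_filter, Finset.mem_image, hDp, hD, Finset.mem_product, Prod.ext_iff]
      constructor
      · rintro ⟨⟨⟨ha, hb⟩, hne⟩, hnlt⟩
        exact ⟨⟨b, a⟩, ⟨⟨⟨hb, ha⟩, by omega⟩, by omega⟩, rfl, rfl⟩
      · rintro ⟨⟨c, d⟩, ⟨⟨⟨hc, hd⟩, hne⟩, hlt⟩, h1, h2⟩
        simp only [Prod.swap] at h1 h2
        refine ⟨⟨⟨?_, ?_⟩, ?_⟩, ?_⟩ <;> simp_all <;> omega
      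
    have hswap : ∑ p ∈ D.filter (fun p => ¬ p.1 < p.2), w p = ∑ p ∈ Dp, w p := by
      rw [himg, Finset.sum_image (by intro x _ y _ h; exact Prod.swap_injective h)]
      refine Finset.sum_congr rfl fun p _ => ?_
      simp only [hw]
      congr 1
      apply Finset.filter_congr
      intro j _
      simp only [Prod.fst_swap, Prod.snd_swap]
      tauto
    -- bound each w p for p ∈ Dp
    have hwle : ∀ p ∈ Dp, w p ≤ t - (p.2 - p.1) := by
      intro p hp
      rw [hDp, Finset.mem_filter] at hp
      obtain ⟨hpD, hlt⟩ := hp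
      rw [hD, Finset.mem_filter, Finset.mem_product] at hpD
      obtain ⟨⟨hp1, hp2⟩, -⟩ := hpD
      obtain ⟨h1, -, -⟩ := hmem _ hp1
      obtain ⟨h2, -, -⟩ := hmem _ hp2
      have hsub : (Finset.range (n + t)).filter (fun j => p.1 ∈ W j ∧ p.2 ∈ W j)
          ⊆ Finset.Icc (p.2 - t) (p.1 - 1) := by
        intro j hj
        simp only [Finset.mem_filter, Finset.mem_range, hW, Finset.mem_Icc] at hj ⊢
        omega
      calc w p ≤ (Finset.Icc (p.2 - t) (p.1 - 1)).card := Finset.card_le_card hsub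
        _ = p.1 - 1 + 1 - (p.2 - t) := Nat.card_Icc _ _
        _ ≤ t - (p.2 - p.1) := by omega
    -- the difference map is injective on Dp
    have hinj : ∀ p ∈ Dp, ∀ q ∈ Dp, p.2 - p.1 = q.2 - q.1 → p = q := by
      intro p hp q hq hpq
      rw [hDp, Finset.mem_filter, hD, Finset.mem_filter, Finset.mem_product] at hp hq
      obtain ⟨⟨⟨hp1, hp2⟩, -⟩, hplt⟩ := hp
      obtain ⟨⟨⟨hq1, hq2⟩, -⟩, hqlt⟩ := hq
      have heq : p.2 + q.1 = q.2 + p.1 := by omega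
      rcases hS' p.2 hp2 q.1 hq1 q.2 hq2 p.1 hp1 heq with ⟨e1, e2⟩ | ⟨e1, e2⟩
      · exact Prod.ext e2.symm e1
      · omega
    have hbound : ∑ p ∈ Dp, w p ≤ ∑ p ∈ Dp, (t - (p.2 - p.1)) := Finset.sum_le_sum hwle
    have himage : ∑ p ∈ Dp, (t - (p.2 - p.1)) = ∑ e ∈ Dp.image (fun p => p.2 - p.1), (t - e) :=
      (Finset.sum_image (fun x hx y hy h => hinj x hx y hy h)).symm
    -- elements of the image are ≥ 1
    have hone : ∀ e ∈ Dp.image (fun p => p.2 - p.1), 1 ≤ e := by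
      intro e he
      obtain ⟨p, hp, rfl⟩ := Finset.mem_image.1 he
      rw [hDp, Finset.mem_filter] at hp
      omega
    have hsum2 : ∑ e ∈ Dp.image (fun p => p.2 - p.1), (t - e) * 2 ≤ t * t := by
      set s := Dp.image (fun p => p.2 - p.1) with hs
      have h1 : ∑ e ∈ s, (t - e) = ∑ e ∈ s.filter (· < t), (t - e) := by
        rw [← Finset.sum_filter_add_sum_filter_not s (· < t)]
        have : ∑ e ∈ s.filter (fun e => ¬ e < t), (t - e) = 0 :=
          Finset.sum_eq_zero (fun e he => by
            rw [Finset.mem_filter] at he; omega)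
        omega
      have hinj2 : ∀ x ∈ s.filter (· < t), ∀ y ∈ s.filter (· < t),
          t - x = t - y → x = y := by
        intro x hx y hy h
        rw [Finset.mem_filter] at hx hy
        omega
      have h2 : ∑ x ∈ (s.filter (· < t)).image (fun e => t - e), (fun x => x) x
          = ∑ e ∈ s.filter (· < t), (fun x => x) (t - e) :=
        Finset.sum_image hinj2
      have h3 : (s.filter (· < t)).image (fun e => t - e) ⊆ Finset.range t := by
        intro x hx
        obtain ⟨e, he, rfl⟩ := Finset.mem_image.1 hx
        rw [Finset.mem_filter] at he
        have := hone e he.1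
        rw [Finset.mem_range]
        omega
      have h4 : ∑ x ∈ (s.filter (· < t)).image (fun e => t - e), x
          ≤ ∑ x ∈ Finset.range t, x := Finset.sum_le_sum_of_subset h3
      have h5 : (∑ x ∈ Finset.range t, x) * 2 = t * (t - 1) := by
        rw [Finset.sum_range_id_mul_two]
      calc ∑ e ∈ s, (t - e) * 2 = (∑ e ∈ s, (t - e)) * 2 := by rw [Finset.sum_mul]
        _ ≤ (∑ x ∈ Finset.range t, x) * 2 := by
            simp only [h1, ← h2]
            omega
        _ = t * (t - 1) := h5
        _ ≤ t * t := Nat.mul_le_mul_left _ (by omega)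
    calc ∑ p ∈ D, w p = ∑ p ∈ Dp, w p + ∑ p ∈ D.filter (fun p => ¬ p.1 < p.2), w p := hDsplit
      _ = ∑ p ∈ Dp, w p + ∑ p ∈ Dp, w p := by rw [hswap]
      _ ≤ ∑ p ∈ Dp, (t - (p.2 - p.1)) + ∑ p ∈ Dp, (t - (p.2 - p.1)) := by omega
      _ ≤ t * t := by
          rw [himage]
          have h6 := hsum2
          rw [← Finset.sum_mul] at h6
          omega
  have hsq : ∀ j, g j ^ 2 = (F'.filter (· ∈ W j)).offDiag.card + g j := by
    intro j
    have hm : g j = (F'.filter (· ∈ W j)).card := rfl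
    have h := Finset.offDiag_card (F'.filter (· ∈ W j))
    rw [← hm] at h
    have hle : g j ≤ g j * g j := by
      rcases Nat.eq_zero_or_pos (g j) with h0 | h0
      · simp [h0]
      · exact Nat.le_mul_of_pos_left _ h0
    rw [sq]
    omega
  have hsum_sq : ∑ j ∈ Finset.range (n + t), g j ^ 2 ≤ t * F'.card + t * t := by
    calc ∑ j ∈ Finset.range (n + t), g j ^ 2
        = ∑ j ∈ Finset.range (n + t), ((F'.filter (· ∈ W j)).offDiag.card + g j) :=
          Finset.sum_congr rfl fun j _ => hsq j
      _ = (∑ j ∈ Finset.range (n + t), (F'.filter (· ∈ W j)).offDiag.card)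
          + ∑ j ∈ Finset.range (n + t), g j := Finset.sum_add_distrib
      _ ≤ t * t + t * F'.card := add_le_add claim2 (le_of_eq claim1)
      _ = t * F'.card + t * t := Nat.add_comm _ _
  have hCS : (∑ j ∈ Finset.range (n + t), g j) ^ 2
      ≤ (Finset.range (n + t)).card * ∑ j ∈ Finset.range (n + t), g j ^ 2 :=
    sq_sum_le_card_mul_sum_sq
  rw [claim1, Finset.card_range] at hCS
  have hmain : (t * F'.card) ^ 2 ≤ (n + t) * (t * F'.card + t * t) :=
    le_trans hCS (Nat.mul_le_mul_left _ hsum_sq)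
  rw [hcard] at hmain
  have e1 : (t * F.card) ^ 2 = F.card ^ 2 * t * t := by ring
  have e2 : (n + t) * (t * F.card + t * t) = (n + t) * (F.card + t) * t := by ring
  rw [e1, e2] at hmain
  exact Nat.le_of_mul_le_mul_right hmain ht

open scoped Classical in
lemma sidon_count_aux (A : Set ℕ) (hA0 : ∀ n ∈ A, 0 < n) (n : ℕ) :
    2 * ((A + A) ∩ Set.Icc 1 n).ncard
      ≤ ((Finset.Icc 1 n).filter (· ∈ A)).card ^ 2
        + ((Finset.Icc 1 n).filter (· ∈ A)).card := by
  set F : Finset ℕ := (Finset.Icc 1 n).filter (· ∈ A) with hF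
  set T : Finset (ℕ × ℕ) := (F ×ˢ F).filter (fun p => p.1 ≤ p.2) with hT
  set φ : ℕ → ℕ × ℕ := fun s =>
    if h : ∃ p : ℕ × ℕ, p.1 ∈ A ∧ p.2 ∈ A ∧ p.1 ≤ p.2 ∧ p.1 + p.2 = s
    then h.choose else (0, 0) with hφdef
  have hφ : ∀ s ∈ (A + A) ∩ Set.Icc 1 n,
      (φ s).1 ∈ A ∧ (φ s).2 ∈ A ∧ (φ s).1 ≤ (φ s).2 ∧ (φ s).1 + (φ s).2 = s := by
    rintro s ⟨hs, -⟩
    rw [Set.mem_add] at hs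
    obtain ⟨x, hx, y, hy, hxy⟩ := hs
    have hex : ∃ p : ℕ × ℕ, p.1 ∈ A ∧ p.2 ∈ A ∧ p.1 ≤ p.2 ∧ p.1 + p.2 = s := by
      rcases le_total x y with h | h
      · exact ⟨(x, y), hx, hy, h, hxy⟩
      · exact ⟨(y, x), hy, hx, h, by omega⟩
    rw [hφdef]
    simp only [dif_pos hex]
    exact hex.choose_spec
  have hinj : Set.InjOn φ ((A + A) ∩ Set.Icc 1 n) := by
    intro s hs s' hs' h
    have h1 := (hφ s hs).2.2.2
    have h2 := (hφ s' hs').2.2.2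
    rw [← h1, ← h2, h]
  have himg : φ '' ((A + A) ∩ Set.Icc 1 n) ⊆ ↑T := by
    rintro p ⟨s, hs, rfl⟩
    obtain ⟨h1, h2, h3, h4⟩ := hφ s hs
    obtain ⟨-, hs1, hs2⟩ := hs
    have hp1 := hA0 _ h1
    have hp2 := hA0 _ h2
    rw [hT]
    simp only [Finset.coe_filter, Set.mem_setOf_eq, Finset.mem_product, hF,
      Finset.mem_filter, Finset.mem_Icc]
    refine ⟨⟨⟨?_, h1⟩, ⟨?_, h2⟩⟩, h3⟩ <;> omega
  have step1 : ((A + A) ∩ Set.Icc 1 n).ncard ≤ T.card := by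
    calc ((A + A) ∩ Set.Icc 1 n).ncard = (φ '' ((A + A) ∩ Set.Icc 1 n)).ncard :=
          (Set.ncard_image_of_injOn hinj).symm
      _ ≤ (↑T : Set (ℕ × ℕ)).ncard := Set.ncard_le_ncard himg T.finite_toSet
      _ = T.card := Set.ncard_coe_finset T
  -- step 2 : 2 * T.card = F.card ^ 2 + F.card
  set Tlt : Finset (ℕ × ℕ) := (F ×ˢ F).filter (fun p => p.1 < p.2) with hTlt
  have hTdecomp : T.card = Tlt.card + F.card := by
    have e1 : T = Tlt ∪ (F ×ˢ F).filter (fun p => p.1 = p.2) := by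
      rw [hT, hTlt, ← Finset.filter_or]
      exact Finset.filter_congr fun p _ => by omega
    have e2 : Disjoint Tlt ((F ×ˢ F).filter (fun p => p.1 = p.2)) := by
      rw [Finset.disjoint_left]
      intro p hp hq
      rw [hTlt, Finset.mem_filter] at hp
      rw [Finset.mem_filter] at hq
      omega
    have e3 : (F ×ˢ F).filter (fun p => p.1 = p.2) = F.diag := by
      ext ⟨a, b⟩
      simp only [Finset.mem_filter, Finset.mem_product, Finset.mem_diag]
      constructor
      · rintro ⟨⟨h1, -⟩, h2⟩; exact ⟨h1, h2⟩
      · rintro ⟨h1, h2⟩; exact ⟨⟨h1, h2 ▸ h1⟩, h2⟩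
    rw [e1, Finset.card_union_of_disjoint e2, e3, Finset.diag_card]
  have hprod : T.card + Tlt.card = F.card * F.card := by
    have e1 := Finset.card_filter_add_card_filter_not
      (s := F ×ˢ F) (p := fun p => p.1 ≤ p.2)
    have e2 : (F ×ˢ F).filter (fun p => ¬ p.1 ≤ p.2) = Tlt.image Prod.swap := by
      ext ⟨a, b⟩
      simp only [Finset.mem_filter, Finset.mem_image, hTlt, Finset.mem_product, Prod.ext_iff]
      constructor
      · rintro ⟨⟨ha, hb⟩, hnle⟩
        exact ⟨(b, a), ⟨⟨hb, ha⟩, by omega⟩, rfl, rfl⟩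
      · rintro ⟨⟨c, d⟩, ⟨⟨hc, hd⟩, hlt⟩, h1, h2⟩
        simp only [Prod.fst_swap, Prod.snd_swap] at h1 h2
        exact ⟨⟨by rwa [← h1], by rwa [← h2]⟩, by omega⟩
    have e3 : (Tlt.image Prod.swap).card = Tlt.card :=
      Finset.card_image_of_injective _ Prod.swap_injective
    rw [e2, e3, Finset.card_product] at e1
    rw [hT]
    exact e1
  have hk : F.card ^ 2 = F.card * F.card := sq F.card
  omega

/-- If A is a Sidon set of positive integers, then the upper asymptotic
density of A + A is at most 1/2. -/
theorem stmt5 (A : Set ℕ) (hA0 : ∀ n ∈ A, 0 < n)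
    (hSidon : ∀ a ∈ A, ∀ b ∈ A, ∀ c ∈ A, ∀ d ∈ A,
      a + b = c + d → (a = c ∧ b = d) ∨ (a = d ∧ b = c)) :
    limsup (fun n : ℕ => (((A + A) ∩ Set.Icc 1 n).ncard : ℝ) / (n : ℝ)) atTop ≤ 1 / 2 := by
  classical
  have sidon_ET : ∀ (n t : ℕ), 0 < t →
      ((Finset.Icc 1 n).filter (· ∈ A)).card ^ 2 * t
        ≤ (n + t) * (((Finset.Icc 1 n).filter (· ∈ A)).card + t) :=
    fun n t ht => sidon_ET_aux A hSidon n t ht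
  have sidon_count : ∀ n : ℕ, 2 * ((A + A) ∩ Set.Icc 1 n).ncard
      ≤ ((Finset.Icc 1 n).filter (· ∈ A)).card ^ 2
        + ((Finset.Icc 1 n).filter (· ∈ A)).card :=
    fun n => sidon_count_aux A hA0 n

  set f : ℕ → ℝ := fun n : ℕ => (((A + A) ∩ Set.Icc 1 n).ncard : ℝ) / (n : ℝ) with hfdef
  have hf0 : ∀ n, 0 ≤ f n := fun n => by positivity
  have hsqrt_tendsto : Tendsto (fun n : ℕ => Real.sqrt n) atTop atTop := by
    refine tendsto_atTop_atTop.2 fun b => ⟨⌈b⌉₊ ^ 2, fun n hn => ?_⟩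
    have h1 : ((⌈b⌉₊ : ℝ)) ^ 2 ≤ (n : ℝ) := by exact_mod_cast hn
    calc b ≤ (⌈b⌉₊ : ℝ) := Nat.le_ceil b
      _ = Real.sqrt ((⌈b⌉₊ : ℝ) ^ 2) := (Real.sqrt_sq (Nat.cast_nonneg _)).symm
      _ ≤ Real.sqrt n := Real.sqrt_le_sqrt h1
  have key : ∀ ε : ℝ, 0 < ε → ∀ᶠ n in atTop, f n ≤ 1 / 2 + ε := by
    intro ε hε
    set C : ℕ := max 1 ⌈2 / ε⌉₊ with hCdef
    have hC1 : 1 ≤ C := le_max_left _ _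
    have hCR : (1 : ℝ) ≤ (C : ℝ) := by exact_mod_cast hC1
    have hC0 : (0 : ℝ) < (C : ℝ) := by linarith
    have hCe : (1 : ℝ) / C ≤ ε / 2 := by
      have h1 : 2 / ε ≤ (C : ℝ) := by
        refine le_trans (Nat.le_ceil _) ?_
        exact_mod_cast le_max_right 1 ⌈2 / ε⌉₊
      have h2 : 2 ≤ (C : ℝ) * ε := by
        have := (div_le_iff₀ hε).1 h1
        linarith
      rw [div_le_div_iff₀ hC0 two_pos]
      linarith
    set d : ℝ := (1 / C + 6 + 2 * C) / 2 with hd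
    have hd0 : 0 < d := by positivity
    have hsmall : ∀ᶠ n : ℕ in atTop, d / Real.sqrt n < ε / 2 := by
      have h := Tendsto.div_atTop (tendsto_const_nhds (x := d)) hsqrt_tendsto
      exact h.eventually_lt_const (by positivity)
    filter_upwards [hsmall, eventually_ge_atTop 1] with n hn1 hn2
    set x := Real.sqrt n with hx
    have hx1 : (1 : ℝ) ≤ x := by
      rw [hx, show (1 : ℝ) = Real.sqrt 1 by simp]
      exact Real.sqrt_le_sqrt (by exact_mod_cast hn2)
    have hx0 : (0 : ℝ) < x := lt_of_lt_of_le one_pos hx1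
    have hnx : (n : ℝ) = x ^ 2 := (Real.sq_sqrt (Nat.cast_nonneg n)).symm
    set kN := ((Finset.Icc 1 n).filter (· ∈ A)).card with hkN
    set k : ℝ := (kN : ℝ) with hk
    have hk0 : (0 : ℝ) ≤ k := Nat.cast_nonneg _
    -- crude bound
    have crude2 : kN ^ 2 ≤ 2 * (kN + n) := by
      refine Nat.le_of_mul_le_mul_right ?_ (show 0 < n by omega)
      calc kN ^ 2 * n ≤ (n + n) * (kN + n) := sidon_ET n n (by omega)
        _ = 2 * (kN + n) * n := by ring
    have crudeR : k ^ 2 ≤ 2 * k + 2 * x ^ 2 := by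
      have h : (kN : ℝ) ^ 2 ≤ 2 * ((kN : ℝ) + (n : ℝ)) := by exact_mod_cast crude2
      rw [hnx] at h
      rw [hk]
      linarith
    have hkx : k ≤ 2 * x + 1 := by
      nlinarith [sq_nonneg (k - 1 - 2 * x), crudeR, hx1, hk0]
    -- ET bound with window length tN
    set tN : ℕ := C * (Nat.sqrt n + 1) with htN
    have htN0 : 0 < tN := by
      have : 1 ≤ Nat.sqrt n + 1 := by omega
      exact Nat.mul_pos (by omega) (by omega)
    set t : ℝ := (tN : ℝ) with ht
    have htl : (C : ℝ) * x ≤ t := by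
      have h := Real.real_sqrt_le_nat_sqrt_succ (a := n)
      rw [ht, htN]
      push_cast
      nlinarith [h, hCR]
    have htu : t ≤ (C : ℝ) * x + C := by
      have h := Real.nat_sqrt_le_real_sqrt (a := n)
      rw [ht, htN]
      push_cast
      nlinarith [h, hCR]
    have ht0 : (0 : ℝ) < t := lt_of_lt_of_le (by positivity) htl
    have hET : k ^ 2 * t ≤ (x ^ 2 + t) * (k + t) := by
      have h := sidon_ET n tN htN0
      have h2 : (kN : ℝ) ^ 2 * (tN : ℝ) ≤ ((n : ℝ) + (tN : ℝ)) * ((kN : ℝ) + (tN : ℝ)) := by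
        exact_mod_cast h
      rw [hnx] at h2
      exact h2
    -- counting bound
    have hcnt : 2 * (((A + A) ∩ Set.Icc 1 n).ncard : ℝ) ≤ k ^ 2 + k := by
      have h := sidon_count n
      rw [← hkN] at h
      rw [hk]
      exact_mod_cast h
    -- division steps
    have hdiv : k ^ 2 ≤ x ^ 2 * k / t + x ^ 2 + k + t := by
      have h1 : k ^ 2 ≤ (x ^ 2 + t) * (k + t) / t := by
        rw [le_div_iff₀ ht0]; exact hET
      have h2 : (x ^ 2 + t) * (k + t) / t = x ^ 2 * k / t + x ^ 2 + k + t := by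
        field_simp
        ring
      linarith [h1, h2.le]
    have hfrac : x ^ 2 * k / t ≤ (2 * x ^ 2 + x) / C := by
      have h1 : x ^ 2 * k / t ≤ x ^ 2 * (2 * x + 1) / ((C : ℝ) * x) := by
        apply div_le_div₀ (by positivity) ?_ (by positivity) htl
        nlinarith [hkx, sq_nonneg x]
      have h2 : x ^ 2 * (2 * x + 1) / ((C : ℝ) * x) = (2 * x ^ 2 + x) / C := by
        field_simp
      linarith [h1, h2.le]
    -- combine everything
    have hmain : 2 * (((A + A) ∩ Set.Icc 1 n).ncard : ℝ)
        ≤ x ^ 2 + 2 * x ^ 2 / C + (1 / C + 6 + 2 * C) * x := by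
      have e1 : (2 * x ^ 2 + x) / C = 2 * x ^ 2 / C + (1 / C) * x := by ring
      nlinarith [hcnt, hdiv, hfrac, hkx, htu, hx1, hCR,
        mul_nonneg (sub_nonneg.2 hx1) (by positivity : (0 : ℝ) ≤ (C : ℝ) + 2)]
    have hff : f n ≤ 1 / 2 + 1 / C + d / x := by
      simp only [hfdef]
      rw [div_le_iff₀ (show (0 : ℝ) < (n : ℝ) by exact_mod_cast Nat.lt_of_lt_of_le Nat.zero_lt_one hn2)]
      rw [hnx]
      have e2 : 2 * ((1 / 2 + 1 / C + d / x) * x ^ 2)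
          = x ^ 2 + 2 * x ^ 2 / C + (1 / C + 6 + 2 * C) * x := by
        rw [hd]
        field_simp
      linarith [hmain, e2]
    have : d / x < ε / 2 := hn1
    linarith [hff, hCe, this]
  refine le_of_forall_pos_le_add fun ε hε => ?_
  refine limsup_le_of_le (isCoboundedUnder_le_of_le atTop hf0) ?_
  exact (key ε hε).mono fun n h => by linarith
end

section
/- The triple integral ∭_D 1/(x^{2/3} y^{2/3} z^{2/3} (x+y-z)^{2/3}) dV over the region D = {(x,y,z) : 0 < x < 1, 0 < y < x, y < z < (x+y)/2} is finite, and in fact is at most 27·2^{2/3}. -/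
open MeasureTheory Set

section aux

lemma L1' {a : ℝ} (ha : 0 < a) :
    ∫⁻ t in Ioo (0:ℝ) a, ENNReal.ofReal (t ^ (-(2:ℝ)/3)) = ENNReal.ofReal (3 * a ^ ((1:ℝ)/3)) := by
  rw [Measure.restrict_congr_set Ioo_ae_eq_Ioc]
  have hint : IntegrableOn (fun t : ℝ => t ^ (-(2:ℝ)/3)) (Ioc 0 a) volume :=
    (intervalIntegral.intervalIntegrable_rpow' (by norm_num)).1
  have hnn : 0 ≤ᶠ[ae (volume.restrict (Ioc (0:ℝ) a))] fun t : ℝ => t ^ (-(2:ℝ)/3) :=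
    (ae_restrict_mem measurableSet_Ioc).mono fun t ht => Real.rpow_nonneg ht.1.le _
  rw [← ofReal_integral_eq_lintegral_ofReal hint hnn]
  congr 1
  rw [← intervalIntegral.integral_of_le ha.le, integral_rpow (Or.inl (by norm_num))]
  rw [Real.zero_rpow (by norm_num), show (-(2:ℝ)/3 + 1) = 1/3 by norm_num]
  ring

lemma L2' {x : ℝ} (hx : 0 < x) :
    ∫⁻ q : ℝ × ℝ in (Ioo 0 x ×ˢ Ioo 0 x),
      ENNReal.ofReal (q.1 ^ (-(2:ℝ)/3)) * ENNReal.ofReal (q.2 ^ (-(2:ℝ)/3)) =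
    ENNReal.ofReal (3 * x ^ ((1:ℝ)/3)) * ENNReal.ofReal (3 * x ^ ((1:ℝ)/3)) := by
  rw [Measure.volume_eq_prod, ← Measure.prod_restrict,
    lintegral_prod_mul (f := fun t : ℝ => ENNReal.ofReal (t ^ (-(2:ℝ)/3)))
      (g := fun t : ℝ => ENNReal.ofReal (t ^ (-(2:ℝ)/3))) (by fun_prop) (by fun_prop), L1' hx]

noncomputable def gbd : ℝ × ℝ × ℝ → ENNReal := fun p =>
  ENNReal.ofReal ((2:ℝ) ^ ((2:ℝ)/3) * p.1 ^ (-(4:ℝ)/3)) *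
    (ENNReal.ofReal (p.2.1 ^ (-(2:ℝ)/3)) * ENNReal.ofReal (p.2.2 ^ (-(2:ℝ)/3)))

def Tbig : Set (ℝ × ℝ × ℝ) :=
  {p : ℝ × ℝ × ℝ | p.1 ∈ Ioo (0:ℝ) 1 ∧ p.2.1 ∈ Ioo 0 p.1 ∧ p.2.2 ∈ Ioo 0 p.1}

lemma Tbig_meas : MeasurableSet Tbig := by
  have : Tbig = {p : ℝ × ℝ × ℝ | 0 < p.1} ∩ {p | p.1 < 1} ∩ {p | 0 < p.2.1} ∩
      {p | p.2.1 < p.1} ∩ {p | 0 < p.2.2} ∩ {p | p.2.2 < p.1} := by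
    ext p; simp [Tbig, Set.mem_Ioo]; tauto
  rw [this]
  exact ((((((measurableSet_lt measurable_const measurable_fst).inter
    (measurableSet_lt measurable_fst measurable_const)).inter
    (measurableSet_lt measurable_const (measurable_fst.comp measurable_snd))).inter
    (measurableSet_lt (measurable_fst.comp measurable_snd) measurable_fst)).inter
    (measurableSet_lt measurable_const (measurable_snd.comp measurable_snd))).inter
    (measurableSet_lt (measurable_snd.comp measurable_snd) measurable_fst))

lemma gbd_meas : Measurable gbd := by unfold gbd; fun_prop

lemma L3' : ∫⁻ p in Tbig, gbd p = ENNReal.ofReal (27 * 2 ^ ((2:ℝ)/3)) := by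
  rw [← lintegral_indicator Tbig_meas]
  rw [Measure.volume_eq_prod, lintegral_prod _ ((gbd_meas.indicator Tbig_meas).aemeasurable)]
  have key : ∀ x : ℝ, (∫⁻ q : ℝ × ℝ, Tbig.indicator gbd (x, q)) =
      (Ioo (0:ℝ) 1).indicator (fun x => ENNReal.ofReal (9 * 2 ^ ((2:ℝ)/3) * x ^ (-(2:ℝ)/3))) x := by
    intro x
    by_cases hx : x ∈ Ioo (0:ℝ) 1
    · rw [indicator_of_mem hx]
      have hrw : ∀ q : ℝ × ℝ, Tbig.indicator gbd (x, q) =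
          (Ioo 0 x ×ˢ Ioo 0 x).indicator (fun q => gbd (x, q)) q := by
        intro q
        by_cases hq : q ∈ Ioo 0 x ×ˢ Ioo 0 x
        · rw [indicator_of_mem hq]
          exact indicator_of_mem (show (x, q) ∈ Tbig from ⟨hx, hq.1, hq.2⟩) _
        · rw [indicator_of_notMem hq, indicator_of_notMem]
          intro h; exact hq ⟨h.2.1, h.2.2⟩
      simp_rw [hrw]
      rw [lintegral_indicator (measurableSet_Ioo.prod measurableSet_Ioo)]
      show (∫⁻ q : ℝ × ℝ in Ioo 0 x ×ˢ Ioo 0 x,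
        ENNReal.ofReal ((2:ℝ) ^ ((2:ℝ)/3) * x ^ (-(4:ℝ)/3)) *
          (ENNReal.ofReal (q.1 ^ (-(2:ℝ)/3)) * ENNReal.ofReal (q.2 ^ (-(2:ℝ)/3)))) = _
      rw [lintegral_const_mul _ (by fun_prop), L2' hx.1]
      rw [← ENNReal.ofReal_mul (mul_nonneg (by norm_num) (Real.rpow_nonneg hx.1.le _)),
        ← ENNReal.ofReal_mul (mul_nonneg (Real.rpow_nonneg (by norm_num) _)
          (Real.rpow_nonneg hx.1.le _))]
      congr 1
      have hpow : x ^ (-(4:ℝ)/3) * x ^ ((1:ℝ)/3) * x ^ ((1:ℝ)/3) = x ^ (-(2:ℝ)/3) := by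
        rw [← Real.rpow_add hx.1, ← Real.rpow_add hx.1]; norm_num
      rw [← hpow]; ring
    · rw [indicator_of_notMem hx]
      have h0 : ∀ q : ℝ × ℝ, Tbig.indicator gbd (x, q) = 0 := fun q =>
        indicator_of_notMem (fun h => hx h.1) _
      simp [h0]
  simp_rw [key]
  rw [lintegral_indicator measurableSet_Ioo]
  have : ∀ x : ℝ, ENNReal.ofReal (9 * 2 ^ ((2:ℝ)/3) * x ^ (-(2:ℝ)/3)) =
      ENNReal.ofReal (9 * 2 ^ ((2:ℝ)/3)) * ENNReal.ofReal (x ^ (-(2:ℝ)/3)) := fun x =>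
    ENNReal.ofReal_mul (by positivity)
  simp_rw [this]
  rw [lintegral_const_mul _ (by fun_prop), L1' one_pos, ← ENNReal.ofReal_mul (by positivity)]
  congr 1
  rw [Real.one_rpow]; ring

end aux

/-- The integral of 1/(x^{2/3} y^{2/3} z^{2/3} (x+y-z)^{2/3}) over
D = {(x,y,z) : 0 < x < 1, 0 < y < x, y < z < (x+y)/2} is finite (the function is
integrable on D), and the integral is at most 27·2^{2/3}. -/
theorem stmt9 :
    IntegrableOn
      (fun p : ℝ × ℝ × ℝ =>
        1 / (p.1 ^ ((2:ℝ)/3) * p.2.1 ^ ((2:ℝ)/3) * p.2.2 ^ ((2:ℝ)/3) *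
          (p.1 + p.2.1 - p.2.2) ^ ((2:ℝ)/3)))
      {p : ℝ × ℝ × ℝ | 0 < p.1 ∧ p.1 < 1 ∧ 0 < p.2.1 ∧ p.2.1 < p.1 ∧
        p.2.1 < p.2.2 ∧ p.2.2 < (p.1 + p.2.1) / 2} volume ∧
    (∫ p : ℝ × ℝ × ℝ in
      {p : ℝ × ℝ × ℝ | 0 < p.1 ∧ p.1 < 1 ∧ 0 < p.2.1 ∧ p.2.1 < p.1 ∧
        p.2.1 < p.2.2 ∧ p.2.2 < (p.1 + p.2.1) / 2},
        1 / (p.1 ^ ((2:ℝ)/3) * p.2.1 ^ ((2:ℝ)/3) * p.2.2 ^ ((2:ℝ)/3) *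
          (p.1 + p.2.1 - p.2.2) ^ ((2:ℝ)/3))) ≤ 27 * 2 ^ ((2:ℝ)/3) := by
  set f : ℝ × ℝ × ℝ → ℝ := fun p =>
    1 / (p.1 ^ ((2:ℝ)/3) * p.2.1 ^ ((2:ℝ)/3) * p.2.2 ^ ((2:ℝ)/3) *
      (p.1 + p.2.1 - p.2.2) ^ ((2:ℝ)/3)) with hf_def
  set S : Set (ℝ × ℝ × ℝ) := {p : ℝ × ℝ × ℝ | 0 < p.1 ∧ p.1 < 1 ∧ 0 < p.2.1 ∧ p.2.1 < p.1 ∧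
    p.2.1 < p.2.2 ∧ p.2.2 < (p.1 + p.2.1) / 2} with hS_def
  have hf_meas : Measurable f := by fun_prop
  -- pointwise bound on S
  have hbd : ∀ p ∈ S, ENNReal.ofReal ‖f p‖ ≤ gbd p := by
    rintro ⟨x, y, z⟩ ⟨hx, hx1, hy, hyx, hyz, hz2⟩
    simp only at hx hx1 hy hyx hyz hz2
    have hz : 0 < z := hy.trans hyz
    have hw : 0 < x + y - z := by linarith
    have hwx : x / 2 ≤ x + y - z := by linarith
    have hxa : (0:ℝ) < x ^ ((2:ℝ)/3) := Real.rpow_pos_of_pos hx _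
    have hya : (0:ℝ) < y ^ ((2:ℝ)/3) := Real.rpow_pos_of_pos hy _
    have hza : (0:ℝ) < z ^ ((2:ℝ)/3) := Real.rpow_pos_of_pos hz _
    have hx2a : (0:ℝ) < (x/2) ^ ((2:ℝ)/3) := Real.rpow_pos_of_pos (by linarith) _
    have hwa : (x/2) ^ ((2:ℝ)/3) ≤ (x + y - z) ^ ((2:ℝ)/3) :=
      Real.rpow_le_rpow (by linarith) hwx (by norm_num)
    have hfval : f (x, y, z) =
        1 / (x ^ ((2:ℝ)/3) * y ^ ((2:ℝ)/3) * z ^ ((2:ℝ)/3) * (x + y - z) ^ ((2:ℝ)/3)) := rfl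
    have hfpos : 0 < f (x, y, z) := by
      rw [hfval]; positivity
    have hnorm : ‖f (x, y, z)‖ = f (x, y, z) := by
      rw [Real.norm_eq_abs, abs_of_pos hfpos]
    rw [hnorm]
    have hineq : f (x, y, z) ≤
        (2:ℝ) ^ ((2:ℝ)/3) * x ^ (-(4:ℝ)/3) * (y ^ (-(2:ℝ)/3) * z ^ (-(2:ℝ)/3)) := by
      rw [hfval]
      have step1 : 1 / (x ^ ((2:ℝ)/3) * y ^ ((2:ℝ)/3) * z ^ ((2:ℝ)/3) * (x + y - z) ^ ((2:ℝ)/3))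
          ≤ 1 / (x ^ ((2:ℝ)/3) * y ^ ((2:ℝ)/3) * z ^ ((2:ℝ)/3) * (x/2) ^ ((2:ℝ)/3)) := by
        apply one_div_le_one_div_of_le (by positivity)
        exact mul_le_mul_of_nonneg_left hwa (by positivity)
      refine step1.trans_eq ?_
      rw [Real.div_rpow hx.le (by norm_num : (0:ℝ) ≤ 2)]
      have h2a : (0:ℝ) < (2:ℝ) ^ ((2:ℝ)/3) := Real.rpow_pos_of_pos (by norm_num) _
      have e1 : x ^ (-(4:ℝ)/3) = (x ^ ((2:ℝ)/3) * x ^ ((2:ℝ)/3))⁻¹ := by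
        rw [← Real.rpow_add hx, show ((2:ℝ)/3 + 2/3) = (4:ℝ)/3 by norm_num,
          show (-(4:ℝ)/3) = -((4:ℝ)/3) by norm_num, Real.rpow_neg hx.le]
      have e2 : y ^ (-(2:ℝ)/3) = (y ^ ((2:ℝ)/3))⁻¹ := by
        rw [show (-(2:ℝ)/3) = -((2:ℝ)/3) by norm_num, Real.rpow_neg hy.le]
      have e3 : z ^ (-(2:ℝ)/3) = (z ^ ((2:ℝ)/3))⁻¹ := by
        rw [show (-(2:ℝ)/3) = -((2:ℝ)/3) by norm_num, Real.rpow_neg hz.le]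
      rw [e1, e2, e3]
      field_simp
    calc ENNReal.ofReal (f (x, y, z)) ≤ ENNReal.ofReal ((2:ℝ) ^ ((2:ℝ)/3) * x ^ (-(4:ℝ)/3) *
          (y ^ (-(2:ℝ)/3) * z ^ (-(2:ℝ)/3))) := ENNReal.ofReal_le_ofReal hineq
      _ = gbd (x, y, z) := by
          unfold gbd
          rw [ENNReal.ofReal_mul (mul_nonneg (Real.rpow_nonneg (by norm_num) _)
            (Real.rpow_nonneg hx.le _)),
            ENNReal.ofReal_mul (Real.rpow_nonneg hy.le _)]
  have hSsub : S ⊆ Tbig := by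
    rintro ⟨x, y, z⟩ ⟨hx, hx1, hy, hyx, hyz, hz2⟩
    simp only at hx hx1 hy hyx hyz hz2
    exact ⟨⟨hx, hx1⟩, ⟨hy, hyx⟩, ⟨hy.trans hyz, by linarith⟩⟩
  have hlin : ∫⁻ p in S, ENNReal.ofReal ‖f p‖ ≤ ENNReal.ofReal (27 * 2 ^ ((2:ℝ)/3)) :=
    calc ∫⁻ p in S, ENNReal.ofReal ‖f p‖ ≤ ∫⁻ p in S, gbd p := setLIntegral_mono gbd_meas hbd
      _ ≤ ∫⁻ p in Tbig, gbd p := lintegral_mono_set hSsub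
      _ = _ := L3'
  have hInt : IntegrableOn f S volume := by
    refine ⟨hf_meas.aestronglyMeasurable, ?_⟩
    rw [hasFiniteIntegral_iff_norm]
    exact lt_of_le_of_lt hlin ENNReal.ofReal_lt_top
  refine ⟨hInt, ?_⟩
  calc (∫ p in S, f p) ≤ ‖∫ p in S, f p‖ := Real.le_norm_self _
    _ ≤ (∫⁻ p in S, ENNReal.ofReal ‖f p‖).toReal := norm_integral_le_lintegral_norm f
    _ ≤ (ENNReal.ofReal (27 * 2 ^ ((2:ℝ)/3))).toReal :=
        ENNReal.toReal_mono ENNReal.ofReal_ne_top hlin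
    _ = 27 * 2 ^ ((2:ℝ)/3) := ENNReal.toReal_ofReal (by positivity)
end

section
/- There is a constant C > 0 such that for all N ≥ 2, ∑_{x₁=3}^{N} x₁^{-2/3} ∑_{1 ≤ x₄ < x₁, x₄ ≡ x₁ (mod 2)} x₄^{-2/3} · ((x₁+x₄)/2)^{-2/3} ≤ C·log N. -/
open Finset

lemma sum_rpow_aux : ∀ m : ℕ, ∑ k ∈ Finset.Icc 1 m, (k:ℝ) ^ (-(2:ℝ)/3) ≤ 3 * (m:ℝ) ^ ((1:ℝ)/3) := by
  intro m
  induction m with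
  | zero => simp
  | succ n ih =>
    rw [Finset.sum_Icc_succ_top (by omega)]
    set a : ℝ := (n : ℝ) with ha
    have hb : ((n+1 : ℕ) : ℝ) = a + 1 := by push_cast; ring
    rw [hb]
    have ha0 : (0:ℝ) ≤ a := Nat.cast_nonneg n
    have hb0 : (0:ℝ) < a + 1 := by linarith
    -- AM-GM: (a+1)^(2/3) * a^(1/3) ≤ 2/3*(a+1) + 1/3*a
    have amgm : (a+1) ^ ((2:ℝ)/3) * a ^ ((1:ℝ)/3) ≤ 2/3*(a+1) + 1/3*a :=
      Real.geom_mean_le_arith_mean2_weighted (by norm_num) (by norm_num) hb0.le ha0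
        (by norm_num)
    -- key: (a+1)^(1/3) - a^(1/3) ≥ (1/3) * (a+1)^(-2/3)
    have h1 : (a+1) ^ ((1:ℝ)/3) = (a+1) ^ (-(2:ℝ)/3) * (a+1) := by
      rw [← Real.rpow_add_one hb0.ne']
      norm_num
    have h2 : a ^ ((1:ℝ)/3) = (a+1) ^ (-(2:ℝ)/3) * ((a+1) ^ ((2:ℝ)/3) * a ^ ((1:ℝ)/3)) := by
      rw [← mul_assoc, ← Real.rpow_add hb0]
      norm_num
    have hpos : (0:ℝ) < (a+1) ^ (-(2:ℝ)/3) := Real.rpow_pos_of_pos hb0 _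
    have key : (a+1) ^ (-(2:ℝ)/3) ≤ 3 * ((a+1) ^ ((1:ℝ)/3) - a ^ ((1:ℝ)/3)) := by
      rw [h1, h2]
      have : (a+1) - ((a+1) ^ ((2:ℝ)/3) * a ^ ((1:ℝ)/3)) ≥ 1/3 := by linarith
      nlinarith [hpos]
    linarith

lemma harmonic_aux : ∀ N : ℕ, 2 ≤ N → ∑ i ∈ Finset.Icc 3 N, (i:ℝ)⁻¹ ≤ Real.log N := by
  intro N hN
  induction N with
  | zero => omega
  | succ n ih =>
    rcases Nat.lt_or_ge n 2 with h | h
    · interval_cases n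
      · omega
      · simp [show Finset.Icc 3 2 = ∅ from rfl]
        positivity
    · have ihn := ih h
      rw [Finset.sum_Icc_succ_top (by omega)]
      have hn0 : (0:ℝ) < n := by positivity
      have hn1 : (0:ℝ) < (n:ℝ) + 1 := by linarith
      have hlog : Real.log n + ((n:ℝ)+1)⁻¹ ≤ Real.log (n+1) := by
        have h3 : Real.log ((n:ℝ)/((n:ℝ)+1)) ≤ (n:ℝ)/((n:ℝ)+1) - 1 :=
          Real.log_le_sub_one_of_pos (by positivity)
        rw [Real.log_div hn0.ne' hn1.ne'] at h3
        have : (n:ℝ)/((n:ℝ)+1) - 1 = -((n:ℝ)+1)⁻¹ := by field_simp; ring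
        rw [this] at h3
        linarith
      push_cast
      push_cast at ihn hlog
      linarith

/-- ∑_{x₁=3}^{N} x₁^{-2/3} ∑_{1 ≤ x₄ < x₁, x₄ ≡ x₁ (mod 2)}
x₄^{-2/3}·((x₁+x₄)/2)^{-2/3} ≤ C·log N for all N ≥ 2. -/
theorem stmt10 : ∃ C > (0:ℝ), ∀ N : ℕ, 2 ≤ N →
    ∑ x₁ ∈ Finset.Icc 3 N, (x₁ : ℝ) ^ (-(2:ℝ)/3) *
      ∑ x₄ ∈ (Finset.Icc 1 (x₁ - 1)).filter (fun x₄ => x₄ % 2 = x₁ % 2),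
        (x₄ : ℝ) ^ (-(2:ℝ)/3) * (((x₁ : ℝ) + (x₄ : ℝ)) / 2) ^ (-(2:ℝ)/3)
      ≤ C * Real.log N := by
  refine ⟨6, by norm_num, fun N hN => ?_⟩
  have step : ∀ x₁ ∈ Finset.Icc 3 N, (x₁ : ℝ) ^ (-(2:ℝ)/3) *
      ∑ x₄ ∈ (Finset.Icc 1 (x₁ - 1)).filter (fun x₄ => x₄ % 2 = x₁ % 2),
        (x₄ : ℝ) ^ (-(2:ℝ)/3) * (((x₁ : ℝ) + (x₄ : ℝ)) / 2) ^ (-(2:ℝ)/3)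
      ≤ 6 * (x₁:ℝ)⁻¹ := by
    intro x₁ hx₁
    simp only [Finset.mem_Icc] at hx₁
    have hx3 : 3 ≤ x₁ := hx₁.1
    have hx0 : (0:ℝ) < x₁ := by positivity
    have hx2 : (0:ℝ) < (x₁:ℝ)/2 := by positivity
    -- bound inner sum
    have inner : ∑ x₄ ∈ (Finset.Icc 1 (x₁ - 1)).filter (fun x₄ => x₄ % 2 = x₁ % 2),
        (x₄ : ℝ) ^ (-(2:ℝ)/3) * (((x₁ : ℝ) + (x₄ : ℝ)) / 2) ^ (-(2:ℝ)/3)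
        ≤ ((x₁:ℝ)/2) ^ (-(2:ℝ)/3) * (3 * (x₁:ℝ) ^ ((1:ℝ)/3)) := by
      calc ∑ x₄ ∈ (Finset.Icc 1 (x₁ - 1)).filter (fun x₄ => x₄ % 2 = x₁ % 2),
            (x₄ : ℝ) ^ (-(2:ℝ)/3) * (((x₁ : ℝ) + (x₄ : ℝ)) / 2) ^ (-(2:ℝ)/3)
          ≤ ∑ x₄ ∈ Finset.Icc 1 (x₁ - 1),
            (x₄ : ℝ) ^ (-(2:ℝ)/3) * ((x₁:ℝ)/2) ^ (-(2:ℝ)/3) := by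
            refine le_trans (Finset.sum_le_sum_of_subset_of_nonneg (Finset.filter_subset _ _)
              (fun i hi _ => by positivity)) (Finset.sum_le_sum fun i hi => ?_)
            have hi1 : 1 ≤ i := (Finset.mem_Icc.mp hi).1
            have : ((x₁:ℝ))/2 ≤ ((x₁:ℝ) + i)/2 := by
              have : (0:ℝ) ≤ (i:ℝ) := Nat.cast_nonneg i
              linarith
            exact mul_le_mul_of_nonneg_left
              (Real.rpow_le_rpow_of_nonpos hx2 this (by norm_num))
              (by positivity)
        _ = ((x₁:ℝ)/2) ^ (-(2:ℝ)/3) * ∑ x₄ ∈ Finset.Icc 1 (x₁ - 1), (x₄:ℝ) ^ (-(2:ℝ)/3) := by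
            rw [← Finset.sum_mul, mul_comm]
        _ ≤ ((x₁:ℝ)/2) ^ (-(2:ℝ)/3) * (3 * ((x₁-1 : ℕ):ℝ) ^ ((1:ℝ)/3)) := by
            exact mul_le_mul_of_nonneg_left (sum_rpow_aux _) (by positivity)
        _ ≤ ((x₁:ℝ)/2) ^ (-(2:ℝ)/3) * (3 * (x₁:ℝ) ^ ((1:ℝ)/3)) := by
            refine mul_le_mul_of_nonneg_left (by
              refine mul_le_mul_of_nonneg_left ?_ (by norm_num)
              exact Real.rpow_le_rpow (Nat.cast_nonneg _)
                (by exact_mod_cast Nat.sub_le x₁ 1) (by norm_num)) (by positivity)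
    -- (x₁/2)^(-2/3) ≤ 2 * x₁^(-2/3)
    have half : ((x₁:ℝ)/2) ^ (-(2:ℝ)/3) ≤ 2 * (x₁:ℝ) ^ (-(2:ℝ)/3) := by
      have hx : (0:ℝ) < (x₁:ℝ) ^ (-(2:ℝ)/3) := Real.rpow_pos_of_pos hx0 _
      have heq : ((x₁:ℝ)/2) ^ (-(2:ℝ)/3) = (x₁:ℝ) ^ (-(2:ℝ)/3) * (2:ℝ) ^ ((2:ℝ)/3) := by
        rw [div_eq_mul_inv, Real.mul_rpow hx0.le (by norm_num),
          Real.inv_rpow (by norm_num), ← Real.rpow_neg (by norm_num)]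
        norm_num
      rw [heq]
      have h2 : (2:ℝ) ^ ((2:ℝ)/3) ≤ 2 := by
        calc (2:ℝ) ^ ((2:ℝ)/3) ≤ 2 ^ (1:ℝ) :=
            Real.rpow_le_rpow_of_exponent_le (by norm_num) (by norm_num)
          _ = 2 := Real.rpow_one 2
      nlinarith
    -- combine
    have hexp : (x₁:ℝ) ^ (-(2:ℝ)/3) * ((x₁:ℝ) ^ (-(2:ℝ)/3) * (x₁:ℝ) ^ ((1:ℝ)/3)) = (x₁:ℝ)⁻¹ := by
      rw [← Real.rpow_add hx0, ← Real.rpow_add hx0, ← Real.rpow_neg_one (x₁:ℝ)]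
      norm_num
    have hS : (0:ℝ) ≤ (x₁:ℝ) ^ (-(2:ℝ)/3) := (Real.rpow_pos_of_pos hx0 _).le
    calc (x₁ : ℝ) ^ (-(2:ℝ)/3) *
          ∑ x₄ ∈ (Finset.Icc 1 (x₁ - 1)).filter (fun x₄ => x₄ % 2 = x₁ % 2),
            (x₄ : ℝ) ^ (-(2:ℝ)/3) * (((x₁ : ℝ) + (x₄ : ℝ)) / 2) ^ (-(2:ℝ)/3)
        ≤ (x₁ : ℝ) ^ (-(2:ℝ)/3) * (((x₁:ℝ)/2) ^ (-(2:ℝ)/3) * (3 * (x₁:ℝ) ^ ((1:ℝ)/3))) :=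
          mul_le_mul_of_nonneg_left inner hS
      _ ≤ (x₁ : ℝ) ^ (-(2:ℝ)/3) * ((2 * (x₁:ℝ) ^ (-(2:ℝ)/3)) * (3 * (x₁:ℝ) ^ ((1:ℝ)/3))) := by
          refine mul_le_mul_of_nonneg_left (mul_le_mul_of_nonneg_right half (by positivity)) hS
      _ = 6 * ((x₁:ℝ) ^ (-(2:ℝ)/3) * ((x₁:ℝ) ^ (-(2:ℝ)/3) * (x₁:ℝ) ^ ((1:ℝ)/3))) := by ring
      _ = 6 * (x₁:ℝ)⁻¹ := by rw [hexp]
  calc ∑ x₁ ∈ Finset.Icc 3 N, (x₁ : ℝ) ^ (-(2:ℝ)/3) *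
        ∑ x₄ ∈ (Finset.Icc 1 (x₁ - 1)).filter (fun x₄ => x₄ % 2 = x₁ % 2),
          (x₄ : ℝ) ^ (-(2:ℝ)/3) * (((x₁ : ℝ) + (x₄ : ℝ)) / 2) ^ (-(2:ℝ)/3)
      ≤ ∑ x₁ ∈ Finset.Icc 3 N, 6 * (x₁:ℝ)⁻¹ := Finset.sum_le_sum step
    _ = 6 * ∑ x₁ ∈ Finset.Icc 3 N, (x₁:ℝ)⁻¹ := by rw [Finset.mul_sum]
    _ ≤ 6 * Real.log N := by
        have := harmonic_aux N hN
        linarith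
end

section
/- There is a constant C > 0 such that for every positive integer x₀ and every N ≥ x₀, ∑ over triples (x₂, x₃, x₄) of positive integers with x₀ + x₂ = x₃ + x₄, x₀ < x₂ ≤ N, and x₃ < x₄, of x₂^{-2/3}·x₃^{-2/3}·x₄^{-2/3}, is at most C·log N. -/
lemma key1 (a : ℝ) (ha : 0 ≤ a) :
    (a+1) ^ (-(2:ℝ)/3) ≤ 3 * ((a+1) ^ ((1:ℝ)/3) - a ^ ((1:ℝ)/3)) := by
  set u := (a+1) ^ ((1:ℝ)/3) with hu
  set v := a ^ ((1:ℝ)/3) with hv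
  have ha1 : (0:ℝ) < a + 1 := by linarith
  have hupos : 0 < u := Real.rpow_pos_of_pos ha1 _
  have hvnn : 0 ≤ v := Real.rpow_nonneg ha _
  have hvu : v ≤ u := Real.rpow_le_rpow ha (by linarith) (by norm_num)
  have hu3 : u ^ 3 = a + 1 := by
    rw [hu, ← Real.rpow_natCast _ 3, ← Real.rpow_mul (le_of_lt ha1)]
    norm_num
  have hv3 : v ^ 3 = a := by
    rw [hv, ← Real.rpow_natCast _ 3, ← Real.rpow_mul ha]
    norm_num
  have hrw : (a+1) ^ (-(2:ℝ)/3) = (u ^ 2)⁻¹ := by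
    rw [hu, ← Real.rpow_natCast _ 2, ← Real.rpow_mul (le_of_lt ha1),
      ← Real.rpow_neg (le_of_lt ha1)]
    norm_num
  rw [hrw, inv_eq_one_div, div_le_iff₀ (by positivity)]
  nlinarith [mul_nonneg (sq_nonneg (u - v)) hupos.le,
    mul_nonneg (sq_nonneg (u - v)) hvnn]

lemma sum_rpow (M : ℕ) :
    ∑ b ∈ Finset.Icc 1 M, (b:ℝ) ^ (-(2:ℝ)/3) ≤ 3 * (M:ℝ) ^ ((1:ℝ)/3) := by
  induction M with
  | zero => norm_num [Real.zero_rpow]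
  | succ n ih =>
    rw [Finset.sum_Icc_succ_top (by omega : 1 ≤ n + 1)]
    have h := key1 (n:ℝ) (Nat.cast_nonneg n)
    push_cast
    linarith

lemma sum_inv_log (N : ℕ) :
    ∑ n ∈ Finset.Icc 2 N, ((n:ℝ))⁻¹ ≤ Real.log N := by
  induction N with
  | zero => simp
  | succ n ih =>
    rcases Nat.eq_zero_or_pos n with rfl | hn
    · norm_num
    · rw [Finset.sum_Icc_succ_top (by omega : 2 ≤ n + 1)]
      have h1 : (0:ℝ) < n := by exact_mod_cast hn
      have h := Real.log_le_sub_one_of_pos (x := (n:ℝ)/((n:ℝ)+1)) (by positivity)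
      rw [Real.log_div (by positivity) (by positivity)] at h
      have heq : (n:ℝ)/((n:ℝ)+1) - 1 = -(((n:ℝ)+1)⁻¹) := by
        field_simp
        ring
      push_cast
      linarith

lemma half_bound (x y : ℕ) (hx : 1 ≤ x) (hxy : x ≤ 2*y) :
    (y:ℝ) ^ (-(2:ℝ)/3) ≤ (2:ℝ)^((2:ℝ)/3) * (x:ℝ) ^ (-(2:ℝ)/3) := by
  have hx' : (0:ℝ) < x := by exact_mod_cast hx
  have hy' : (x:ℝ)/2 ≤ y := by
    have : (x:ℝ) ≤ 2*y := by exact_mod_cast hxy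
    linarith
  have h1 : (y:ℝ) ^ (-(2:ℝ)/3) ≤ ((x:ℝ)/2) ^ (-(2:ℝ)/3) :=
    Real.rpow_le_rpow_of_nonpos (by positivity) hy' (by norm_num)
  refine h1.trans_eq ?_
  have h2 : (2:ℝ) ^ (-(2:ℝ)/3) = ((2:ℝ)^((2:ℝ)/3))⁻¹ := by
    rw [← Real.rpow_neg (by norm_num)]; norm_num
  rw [Real.div_rpow (by positivity) (by norm_num), h2]
  field_simp

lemma per_a (x₀ a : ℕ) (h1 : 1 ≤ x₀) (h2 : x₀ < a) :
    ∑ b ∈ Finset.Icc 1 (x₀ + a),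
      (2:ℝ)^((2:ℝ)/3) * (a:ℝ)^(-(2:ℝ)/3) * (b:ℝ)^(-(2:ℝ)/3) * (a:ℝ)^(-(2:ℝ)/3)
    ≤ 6 * (a:ℝ)⁻¹ := by
  have ha : (0:ℝ) < a := by
    have : 0 < a := by omega
    exact_mod_cast this
  have hK : (0:ℝ) ≤ (2:ℝ)^((2:ℝ)/3) * (a:ℝ)^(-(2:ℝ)/3) * (a:ℝ)^(-(2:ℝ)/3) := by positivity
  have hsum := sum_rpow (x₀ + a)
  have hmono : ((x₀ + a : ℕ):ℝ) ^ ((1:ℝ)/3) ≤ ((2*a:ℕ):ℝ) ^ ((1:ℝ)/3) := by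
    apply Real.rpow_le_rpow (by positivity) _ (by norm_num)
    exact_mod_cast (by omega : x₀ + a ≤ 2*a)
  have e1 : ((2*a:ℕ):ℝ) ^ ((1:ℝ)/3) = (2:ℝ)^((1:ℝ)/3) * (a:ℝ)^((1:ℝ)/3) := by
    push_cast
    exact Real.mul_rpow (by norm_num) (Nat.cast_nonneg a)
  have e2 : (2:ℝ)^((2:ℝ)/3) * (2:ℝ)^((1:ℝ)/3) = 2 := by
    rw [← Real.rpow_add (by norm_num)]; norm_num
  have e3 : (a:ℝ)^(-(2:ℝ)/3) * (a:ℝ)^(-(2:ℝ)/3) * (a:ℝ)^((1:ℝ)/3) = (a:ℝ)⁻¹ := by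
    rw [← Real.rpow_add ha, ← Real.rpow_add ha]
    norm_num [Real.rpow_neg_one]
  calc ∑ b ∈ Finset.Icc 1 (x₀ + a),
      (2:ℝ)^((2:ℝ)/3) * (a:ℝ)^(-(2:ℝ)/3) * (b:ℝ)^(-(2:ℝ)/3) * (a:ℝ)^(-(2:ℝ)/3)
      = ((2:ℝ)^((2:ℝ)/3) * (a:ℝ)^(-(2:ℝ)/3) * (a:ℝ)^(-(2:ℝ)/3)) *
        ∑ b ∈ Finset.Icc 1 (x₀ + a), (b:ℝ)^(-(2:ℝ)/3) := by
        rw [Finset.mul_sum]; exact Finset.sum_congr rfl fun b _ => by ring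
    _ ≤ ((2:ℝ)^((2:ℝ)/3) * (a:ℝ)^(-(2:ℝ)/3) * (a:ℝ)^(-(2:ℝ)/3)) *
        (3 * ((2*a:ℕ):ℝ) ^ ((1:ℝ)/3)) := by
        apply mul_le_mul_of_nonneg_left _ hK
        exact hsum.trans (by nlinarith [hmono])
    _ = 3 * ((2:ℝ)^((2:ℝ)/3) * (2:ℝ)^((1:ℝ)/3)) *
        ((a:ℝ)^(-(2:ℝ)/3) * (a:ℝ)^(-(2:ℝ)/3) * (a:ℝ)^((1:ℝ)/3)) := by
        rw [e1]; ring
    _ = 6 * (a:ℝ)⁻¹ := by rw [e2, e3]; ring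

/-- There is C > 0 such that for every x₀ ≥ 1 and N ≥ x₀, the sum over
triples (x₂,x₃,x₄) of positive integers with x₀ + x₂ = x₃ + x₄, x₀ < x₂ ≤ N, x₃ < x₄,
of x₂^{-2/3}·x₃^{-2/3}·x₄^{-2/3} is at most C·log N. -/
theorem stmt11 : ∃ C > (0:ℝ), ∀ x₀ N : ℕ, 1 ≤ x₀ → x₀ ≤ N →
    ∑ t ∈ (Finset.Icc 1 (2*N) ×ˢ Finset.Icc 1 (2*N) ×ˢ Finset.Icc 1 (2*N)).filter
        (fun t => x₀ + t.1 = t.2.1 + t.2.2 ∧ x₀ < t.1 ∧ t.1 ≤ N ∧ t.2.1 < t.2.2),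
      (t.1 : ℝ) ^ (-(2:ℝ)/3) * (t.2.1 : ℝ) ^ (-(2:ℝ)/3) * (t.2.2 : ℝ) ^ (-(2:ℝ)/3)
      ≤ C * Real.log N := by
  refine ⟨6, by norm_num, fun x₀ N hx₀ hN => ?_⟩
  set s := (Finset.Icc 1 (2*N) ×ˢ Finset.Icc 1 (2*N) ×ˢ Finset.Icc 1 (2*N)).filter
      (fun t : ℕ × ℕ × ℕ => x₀ + t.1 = t.2.1 + t.2.2 ∧ x₀ < t.1 ∧ t.1 ≤ N ∧ t.2.1 < t.2.2)
    with hs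
  set G : ℕ × ℕ → ℝ := fun p =>
    (2:ℝ)^((2:ℝ)/3) * (p.1:ℝ)^(-(2:ℝ)/3) * (p.2:ℝ)^(-(2:ℝ)/3) * (p.1:ℝ)^(-(2:ℝ)/3)
    with hG
  -- Step 1: pointwise bound
  have hstep1 : ∑ t ∈ s,
      (t.1 : ℝ) ^ (-(2:ℝ)/3) * (t.2.1 : ℝ) ^ (-(2:ℝ)/3) * (t.2.2 : ℝ) ^ (-(2:ℝ)/3)
      ≤ ∑ t ∈ s, G (t.1, t.2.1) := by
    apply Finset.sum_le_sum
    intro t ht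
    rw [hs] at ht
    simp only [Finset.mem_filter, Finset.mem_product, Finset.mem_Icc] at ht
    obtain ⟨⟨h1, h2, h3⟩, he, hlt, hle, h34⟩ := ht
    have hc := half_bound t.1 t.2.2 (by omega) (by omega)
    calc (t.1 : ℝ) ^ (-(2:ℝ)/3) * (t.2.1 : ℝ) ^ (-(2:ℝ)/3) * (t.2.2 : ℝ) ^ (-(2:ℝ)/3)
        ≤ (t.1 : ℝ) ^ (-(2:ℝ)/3) * (t.2.1 : ℝ) ^ (-(2:ℝ)/3) *
          ((2:ℝ)^((2:ℝ)/3) * (t.1:ℝ)^(-(2:ℝ)/3)) := by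
          apply mul_le_mul_of_nonneg_left hc (by positivity)
      _ = G (t.1, t.2.1) := by rw [hG]; ring
  -- Step 2: inject into pairs
  have hstep2 : ∑ t ∈ s, G (t.1, t.2.1) = ∑ p ∈ s.image (fun t => (t.1, t.2.1)), G p := by
    rw [Finset.sum_image]
    intro t ht t' ht' h
    rw [hs] at ht ht'
    simp only [Finset.mem_coe, Finset.mem_filter] at ht ht'
    obtain ⟨-, he, -, -, -⟩ := ht
    obtain ⟨-, he', -, -, -⟩ := ht'
    rw [Prod.ext_iff] at h
    obtain ⟨e1, e2⟩ := h
    simp only at e1 e2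
    have e3 : t.2.2 = t'.2.2 := by omega
    exact Prod.ext e1 (Prod.ext e2 e3)
  -- Step 3: image is inside a nicer set
  set T := (Finset.Icc (x₀+1) N ×ˢ Finset.Icc 1 (2*N)).filter
      (fun p : ℕ × ℕ => p.2 ≤ x₀ + p.1) with hT
  have hstep3 : ∑ p ∈ s.image (fun t => (t.1, t.2.1)), G p ≤ ∑ p ∈ T, G p := by
    apply Finset.sum_le_sum_of_subset_of_nonneg
    · intro p hp
      simp only [Finset.mem_image] at hp
      obtain ⟨t, ht, rfl⟩ := hp
      rw [hs] at ht
      simp only [Finset.mem_filter, Finset.mem_product, Finset.mem_Icc] at ht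
      rw [hT]
      simp only [Finset.mem_filter, Finset.mem_product, Finset.mem_Icc]
      omega
    · intro p _ _
      rw [hG]
      positivity
  -- Step 4: rewrite T-sum as double sum
  have hstep4 : ∑ p ∈ T, G p = ∑ a ∈ Finset.Icc (x₀+1) N,
      ∑ b ∈ (Finset.Icc 1 (2*N)).filter (fun b => b ≤ x₀ + a), G (a, b) := by
    rw [hT, Finset.sum_filter, Finset.sum_product]
    exact Finset.sum_congr rfl fun a _ => (Finset.sum_filter _ _).symm
  -- Step 5: bound inner sums
  have hstep5 : ∑ a ∈ Finset.Icc (x₀+1) N,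
      ∑ b ∈ (Finset.Icc 1 (2*N)).filter (fun b => b ≤ x₀ + a), G (a, b)
      ≤ ∑ a ∈ Finset.Icc (x₀+1) N, 6 * (a:ℝ)⁻¹ := by
    apply Finset.sum_le_sum
    intro a ha
    simp only [Finset.mem_Icc] at ha
    refine le_trans (Finset.sum_le_sum_of_subset_of_nonneg ?_ ?_) (per_a x₀ a hx₀ (by omega))
    · intro b hb
      simp only [Finset.mem_filter, Finset.mem_Icc] at hb ⊢
      omega
    · intro b _ _
      rw [hG]
      positivity
  -- Step 6: harmonic sum bound
  have hstep6 : ∑ a ∈ Finset.Icc (x₀+1) N, 6 * (a:ℝ)⁻¹ ≤ 6 * Real.log N := by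
    have hsub : ∑ a ∈ Finset.Icc (x₀+1) N, 6 * (a:ℝ)⁻¹
        ≤ ∑ a ∈ Finset.Icc 2 N, 6 * (a:ℝ)⁻¹ := by
      apply Finset.sum_le_sum_of_subset_of_nonneg
      · exact Finset.Icc_subset_Icc (by omega) le_rfl
      · intro a _ _; positivity
    refine hsub.trans ?_
    rw [← Finset.mul_sum]
    have := sum_inv_log N
    linarith
  calc ∑ t ∈ s,
      (t.1 : ℝ) ^ (-(2:ℝ)/3) * (t.2.1 : ℝ) ^ (-(2:ℝ)/3) * (t.2.2 : ℝ) ^ (-(2:ℝ)/3)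
      ≤ ∑ a ∈ Finset.Icc (x₀+1) N, 6 * (a:ℝ)⁻¹ := by
        rw [hstep2] at hstep1
        rw [hstep4] at hstep3
        exact hstep1.trans (hstep3.trans hstep5)
    _ ≤ 6 * Real.log N := hstep6
end
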